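/- arXiv:2006.04626 — 5 statements merged into one kernel-verified Lean document; each statement's English description precedes it below -/
import Mathlib

section
/- Let S ⊆ ℕ_0^d be an almost symmetric GNS with Frobenius element f, and let x ∈ SG(S) ∖ {f} (so that S ∪ {x} is again a GNS). Then S ∪ {x} is almost symmetric if and only if PF(S ∪ {x}) = PF(S) ∖ {x, f − x}. -/
open scoped BigOperators

/-- A generalized numerical semigroup: a submonoid of `ℕ^d` with finite complement. -/
def IsGNS {d : ℕ} (S : Set (Fin d → ℕ)) : Prop :=
  (0 : Fin d → ℕ) ∈ S ∧ (∀ x y : Fin d → ℕ, x ∈ S → y ∈ S → x + y ∈ S) ∧ Sᶜ.Finite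

/-- The genus: number of gaps. -/
noncomputable def genus {d : ℕ} (S : Set (Fin d → ℕ)) : ℕ := Sᶜ.ncard

/-- Pseudo-Frobenius elements. -/
def PF {d : ℕ} (S : Set (Fin d → ℕ)) : Set (Fin d → ℕ) :=
  {h | h ∉ S ∧ ∀ s ∈ S, s ≠ 0 → h + s ∈ S}

/-- The type: number of pseudo-Frobenius elements. -/
noncomputable def typ {d : ℕ} (S : Set (Fin d → ℕ)) : ℕ := (PF S).ncard

/-- Maximal elements of a set with respect to a relation. -/
def Maximals {α : Type*} (le : α → α → Prop) (X : Set α) : Set α :=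
  {x ∈ X | ∀ y ∈ X, le x y → x = y}

/-- `f` is the unique maximal element of the set of gaps w.r.t. the componentwise order. -/
def IsFrobenius {d : ℕ} (S : Set (Fin d → ℕ)) (f : Fin d → ℕ) : Prop :=
  Maximals (· ≤ ·) Sᶜ = {f}

/-- Almost symmetric: `2 g(S) + 1 - t(S) = ∏ (h i + 1)` for some gap `h`. -/
def AlmostSymmetric {d : ℕ} (S : Set (Fin d → ℕ)) : Prop :=
  ∃ h ∉ S, 2 * genus S + 1 = typ S + ∏ i, (h i + 1)

/-- Special gaps. -/
def SG {d : ℕ} (S : Set (Fin d → ℕ)) : Set (Fin d → ℕ) :=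
  {h ∈ PF S | h + h ∈ S}

/-- The partial order `≤_S` : `y ≤_S x` iff `x - y ∈ S`. -/
def leS {d : ℕ} (S : Set (Fin d → ℕ)) (x y : Fin d → ℕ) : Prop :=
  ∃ s ∈ S, x + s = y

/-- The Apéry set of `S` with respect to `n`. -/
def Ap {d : ℕ} (S : Set (Fin d → ℕ)) (n : Fin d → ℕ) : Set (Fin d → ℕ) :=
  {s ∈ S | ¬ ∃ u ∈ S, u + n = s}

/-- The reduced Apéry set of `S` with respect to `n`. -/
def Cred {d : ℕ} (S : Set (Fin d → ℕ)) (n : Fin d → ℕ) : Set (Fin d → ℕ) :=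
  {s ∈ Ap S n | ∃ h, h ∉ S ∧ s ≤ h + n}

/-- A monomial order on `ℕ^d` given by its strict-order relation. -/
def IsMonomialOrder (d : ℕ) (lt : (Fin d → ℕ) → (Fin d → ℕ) → Prop) : Prop :=
  (∀ a, ¬ lt a a) ∧ (∀ a b c, lt a b → lt b c → lt a c) ∧
  (∀ a b, a ≠ b → lt a b ∨ lt b a) ∧
  (∀ u a b, lt a b → lt (a + u) (b + u)) ∧
  (∀ a, a ≠ (0 : Fin d → ℕ) → lt 0 a)

/-- Minimal generator of a GNS. -/
def IsMinGen {d : ℕ} (S : Set (Fin d → ℕ)) (x : Fin d → ℕ) : Prop :=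
  x ∈ S ∧ x ≠ 0 ∧ ∀ y ∈ S, ∀ z ∈ S, y ≠ 0 → z ≠ 0 → y + z ≠ x

/-- Irreducible GNS: not an intersection of two GNSs properly containing it. -/
def GNSIrreducible {d : ℕ} (S : Set (Fin d → ℕ)) : Prop :=
  ¬ ∃ S₁ S₂ : Set (Fin d → ℕ), IsGNS S₁ ∧ IsGNS S₂ ∧ S ⊂ S₁ ∧ S ⊂ S₂ ∧ S = S₁ ∩ S₂

/-- Pseudo-symmetric: `PF S = {f, f/2}`. -/
def PseudoSymmetric {d : ℕ} (S : Set (Fin d → ℕ)) : Prop :=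
  ∃ f q : Fin d → ℕ, f ≠ q ∧ q + q = f ∧ PF S = {f, q}

namespace St15

variable {d : ℕ}

lemma pi_add_sub_of_le {a f : Fin d → ℕ} (hle : a ≤ f) : a + (f - a) = f := by
  funext i
  have hi : a i ≤ f i := hle i
  simp only [Pi.add_apply, Pi.sub_apply]
  omega

lemma pi_sub_sub_self {a f : Fin d → ℕ} (hle : a ≤ f) : f - (f - a) = a := by
  funext i
  have hi : a i ≤ f i := hle i
  simp only [Pi.sub_apply]
  omega

/-- every gap is ≤ f -/
lemma gaps_le (S : Set (Fin d → ℕ)) (hfin : Sᶜ.Finite) (f : Fin d → ℕ)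
    (hf : IsFrobenius S f) {h : Fin d → ℕ} (hh : h ∉ S) : h ≤ f := by
  have hM : {y ∈ Sᶜ | h ≤ y}.Finite := hfin.subset (fun y hy => hy.1)
  obtain ⟨y, hy, hmax⟩ : ∃ y ∈ {y ∈ Sᶜ | h ≤ y}, ∀ z ∈ {y ∈ Sᶜ | h ≤ y}, y ≤ z → y = z := by
    obtain ⟨y, hy⟩ := hM.exists_maximal ⟨h, hh, le_refl h⟩
    exact ⟨y, hy.1, fun z hz hyz => le_antisymm hyz (hy.2 hz hyz)⟩
  have hyM : y ∈ Maximals (· ≤ ·) Sᶜ := by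
    refine ⟨hy.1, fun z hz hyz => ?_⟩
    exact hmax z ⟨hz, hy.2.trans hyz⟩ hyz
  have : y = f := by rw [IsFrobenius] at hf; have := hf ▸ hyM; simpa using this
  exact this ▸ hy.2

lemma card_Iic (f : Fin d → ℕ) : (Set.Iic f).ncard = ∏ i, (f i + 1) := by
  rw [← Finset.coe_Iic, Set.ncard_coe_finset, Pi.card_Iic]; simp [Nat.card_Iic]

/-- The fundamental counting identity. -/
lemma counting (U : Set (Fin d → ℕ)) (f : Fin d → ℕ)
    (hadd : ∀ a b, a ∈ U → b ∈ U → a + b ∈ U) (hfin : Uᶜ.Finite) (hfU : f ∉ U)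
    (hle : ∀ h, h ∉ U → h ≤ f) :
    2 * Uᶜ.ncard = (∏ i, (f i + 1)) + {h | h ∉ U ∧ f - h ∉ U}.ncard := by
  classical
  have hBfin : (Set.Iic f).Finite := by
    rw [← Finset.coe_Iic]; exact (Finset.Iic f).finite_toSet
  set A : Set (Fin d → ℕ) := {h | h ∉ U ∧ f - h ∈ U} with hA
  set R : Set (Fin d → ℕ) := {h | h ∉ U ∧ f - h ∉ U} with hR
  have hsubB : Uᶜ ⊆ Set.Iic f := fun h hh => hle h hh
  have hAfin : A.Finite := hfin.subset (fun h hh => hh.1)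
  have hRfin : R.Finite := hfin.subset (fun h hh => hh.1)
  have hBUfin : (Set.Iic f ∩ U).Finite := hBfin.subset Set.inter_subset_left
  -- complement of U splits into A and R
  have hsplit1 : Uᶜ = A ∪ R := by
    ext h; constructor
    · intro hh; by_cases hfh : f - h ∈ U
      · exact Or.inl ⟨hh, hfh⟩
      · exact Or.inr ⟨hh, hfh⟩
    · rintro (⟨hh, _⟩ | ⟨hh, _⟩) <;> exact hh
  have h1 : Uᶜ.ncard = A.ncard + R.ncard := by
    rw [hsplit1, Set.ncard_union_eq ?_ hAfin hRfin]
    rw [Set.disjoint_left]; rintro h ⟨_, h2⟩ ⟨_, h3⟩; exact h3 h2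
  -- A is in bijection with (Iic f) ∩ U via h ↦ f - h
  have h2 : A.ncard = (Set.Iic f ∩ U).ncard := by
    have himg : (fun h => f - h) '' A = Set.Iic f ∩ U := by
      ext y; constructor
      · rintro ⟨h, ⟨hh, hfh⟩, rfl⟩
        exact ⟨fun i => Nat.sub_le _ _, hfh⟩
      · rintro ⟨hyB, hyU⟩
        refine ⟨f - y, ⟨?_, ?_⟩, pi_sub_sub_self hyB⟩
        · intro hc
          have heq : y + (f - y) = f := pi_add_sub_of_le hyB
          exact hfU (heq ▸ hadd _ _ hyU hc)
        · rw [pi_sub_sub_self hyB]; exact hyU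
    have hinj : Set.InjOn (fun h => f - h) A := by
      intro a ha b hb hab
      have ha' : a ≤ f := hle a ha.1
      have hb' : b ≤ f := hle b hb.1
      have := congrArg (fun z => f - z) hab
      simpa [pi_sub_sub_self ha', pi_sub_sub_self hb'] using this
    rw [← himg, Set.ncard_image_of_injOn hinj]
  -- Iic f splits into (Iic f ∩ U) and Uᶜ
  have hsplit2 : Set.Iic f = (Set.Iic f ∩ U) ∪ Uᶜ := by
    ext y; constructor
    · intro hy; by_cases hyU : y ∈ U
      · exact Or.inl ⟨hy, hyU⟩
      · exact Or.inr hyU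
    · rintro (⟨hy, _⟩ | hy)
      · exact hy
      · exact hsubB hy
  have h3 : (Set.Iic f).ncard = (Set.Iic f ∩ U).ncard + Uᶜ.ncard := by
    conv_lhs => rw [hsplit2]
    rw [Set.ncard_union_eq ?_ hBUfin hfin]
    rw [Set.disjoint_left]; rintro y ⟨_, h2'⟩ h3'; exact h3' h2'
  have h4 : (Set.Iic f).ncard = ∏ i, (f i + 1) := card_Iic f
  omega

lemma f_mem_PF (U : Set (Fin d → ℕ)) (f : Fin d → ℕ) (hfU : f ∉ U)
    (hle : ∀ h, h ∉ U → h ≤ f) : f ∈ PF U := by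
  refine ⟨hfU, fun s hs hs0 => ?_⟩
  by_contra hc
  have h1 : f + s ≤ f := hle _ hc
  have : s = 0 := by
    funext i
    have hi : f i + s i ≤ f i := h1 i
    simp only [Pi.zero_apply]
    omega
  exact hs0 this

lemma PF_diff_subset (U : Set (Fin d → ℕ)) (f : Fin d → ℕ) (hfU : f ∉ U)
    (hle : ∀ h, h ∉ U → h ≤ f) :
    PF U \ {f} ⊆ {h | h ∉ U ∧ f - h ∉ U} := by
  rintro h ⟨⟨hhU, hPF⟩, hhf⟩
  refine ⟨hhU, fun hc => ?_⟩
  have hhle : h ≤ f := hle h hhU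
  have hne : f - h ≠ 0 := by
    intro h0
    apply hhf
    have : h = f := by
      funext i
      have h1 : h i ≤ f i := hhle i
      have h2 : f i - h i = 0 := congrFun h0 i
      omega
    simp [this]
  have := hPF (f - h) hc hne
  rw [pi_add_sub_of_le hhle] at this
  exact hfU this

/-- Almost symmetry is equivalent to `PF U \ {f}` being all of the symmetric gaps. -/
lemma AS_iff (U : Set (Fin d → ℕ)) (f : Fin d → ℕ)
    (hadd : ∀ a b, a ∈ U → b ∈ U → a + b ∈ U) (hfin : Uᶜ.Finite) (hfU : f ∉ U)
    (hle : ∀ h, h ∉ U → h ≤ f) :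
    AlmostSymmetric U ↔ PF U \ {f} = {h | h ∉ U ∧ f - h ∉ U} := by
  classical
  have hcount := counting U f hadd hfin hfU hle
  have hRfin : {h | h ∉ U ∧ f - h ∉ U}.Finite := hfin.subset (fun h hh => hh.1)
  have hPFfin : (PF U).Finite := hfin.subset (fun h hh => hh.1)
  have hfPF : f ∈ PF U := f_mem_PF U f hfU hle
  have hsub : PF U \ {f} ⊆ {h | h ∉ U ∧ f - h ∉ U} := PF_diff_subset U f hfU hle
  have htyp : (PF U \ {f}).ncard + 1 = typ U :=
    Set.ncard_diff_singleton_add_one hfPF hPFfin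
  constructor
  · rintro ⟨h, hhU, heq⟩
    have hprod : ∏ i, (h i + 1) ≤ ∏ i, (f i + 1) :=
      Finset.prod_le_prod (fun _ _ => Nat.zero_le _)
        (fun i _ => by have hi : h i ≤ f i := hle h hhU i; omega)
    have hcard_le : (PF U \ {f}).ncard ≤ {h | h ∉ U ∧ f - h ∉ U}.ncard :=
      Set.ncard_le_ncard hsub hRfin
    simp only [genus] at heq
    have : {h | h ∉ U ∧ f - h ∉ U}.ncard ≤ (PF U \ {f}).ncard := by omega
    exact Set.eq_of_subset_of_ncard_le hsub this hRfin
  · intro heq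
    refine ⟨f, hfU, ?_⟩
    have hceq : (PF U \ {f}).ncard = {h | h ∉ U ∧ f - h ∉ U}.ncard := by rw [heq]
    simp only [genus]
    omega

end St15

/-- for an almost symmetric GNS `(S,f)` and `x ∈ SG(S) ∖ {f}`,
`S ∪ {x}` is almost symmetric iff `PF(S ∪ {x}) = PF(S) ∖ {x, f - x}`. -/
theorem statement15 (d : ℕ) (hd : 0 < d) (S : Set (Fin d → ℕ)) (hS : IsGNS S)
    (f : Fin d → ℕ) (hf : IsFrobenius S f) (hAS : AlmostSymmetric S)
    (x : Fin d → ℕ) (hx : x ∈ SG S) (hxf : x ≠ f) :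
    AlmostSymmetric (S ∪ {x}) ↔ PF (S ∪ {x}) = PF S \ {x, f - x} := by
  classical
  obtain ⟨h0S, haddS, hfinS⟩ := hS
  obtain ⟨hxPF, hxx⟩ := hx
  have hfS : f ∉ S := by
    have hfM : f ∈ Maximals (· ≤ ·) Sᶜ := by rw [IsFrobenius] at hf; rw [hf]; rfl
    exact hfM.1
  have hleS : ∀ h, h ∉ S → h ≤ f := fun h hh => St15.gaps_le S hfinS f hf hh
  have hxS : x ∉ S := hxPF.1
  have hx0 : x ≠ 0 := fun hc => hxS (hc ▸ h0S)
  have hxlef : x ≤ f := hleS x hxS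
  set T : Set (Fin d → ℕ) := S ∪ {x} with hT
  have hmemT : ∀ y : Fin d → ℕ, y ∈ T ↔ y ∈ S ∨ y = x := by
    intro y; rw [hT, Set.mem_union, Set.mem_singleton_iff]
  have haddT : ∀ a b, a ∈ T → b ∈ T → a + b ∈ T := by
    intro a b ha hb
    rw [hmemT] at ha hb ⊢
    rcases ha with ha | rfl
    · rcases hb with hb | rfl
      · exact Or.inl (haddS a b ha hb)
      · by_cases ha0 : a = 0
        · subst ha0; right; simp
        · left; rw [add_comm]; exact hxPF.2 a ha ha0
    · rcases hb with hb | rfl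
      · by_cases hb0 : b = 0
        · subst hb0; right; simp
        · left; exact hxPF.2 b hb hb0
      · exact Or.inl hxx
  have hfinT : Tᶜ.Finite := hfinS.subset (fun y hy hs => hy (Or.inl hs))
  have hfT : f ∉ T := by
    rw [hmemT]; rintro (h | h)
    · exact hfS h
    · exact hxf h.symm
  have hleT : ∀ h, h ∉ T → h ≤ f := fun h hh => hleS h (fun hs => hh (Or.inl hs))
  have hiffT := St15.AS_iff T f haddT hfinT hfT hleT
  have hRS : PF S \ {f} = {h | h ∉ S ∧ f - h ∉ S} :=
    (St15.AS_iff S f haddS hfinS hfS hleS).mp hAS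
  have hfPFS : f ∈ PF S := St15.f_mem_PF S f hfS hleS
  have hfPFT : f ∈ PF T := St15.f_mem_PF T f hfT hleT
  have hffx : f ≠ f - x := by
    intro hc
    obtain ⟨i, hi⟩ : ∃ i, x i ≠ 0 := by
      by_contra hc'; push_neg at hc'; exact hx0 (funext hc')
    have h1 : f i = f i - x i := congrFun hc i
    have h2 : x i ≤ f i := hxlef i
    omega
  -- key identity for the symmetric-gap sets
  have hkey : {h | h ∉ T ∧ f - h ∉ T} = {h | h ∉ S ∧ f - h ∉ S} \ {x, f - x} := by
    ext h
    simp only [Set.mem_setOf_eq, Set.mem_diff, Set.mem_insert_iff,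
      Set.mem_singleton_iff, hmemT, not_or]
    constructor
    · rintro ⟨⟨hhS, hhx⟩, hfhS, hfhx⟩
      refine ⟨⟨hhS, hfhS⟩, hhx, ?_⟩
      intro hc
      subst hc
      exact hfhx (St15.pi_sub_sub_self hxlef)
    · rintro ⟨⟨hhS, hfhS⟩, hne⟩
      refine ⟨⟨hhS, hne.1⟩, hfhS, ?_⟩
      intro hc
      apply hne.2
      rw [← St15.pi_sub_sub_self (hleS h hhS), hc]
  rw [hiffT, hkey, ← hRS]
  have hcomm : (PF S \ {f}) \ {x, f - x} = (PF S \ {x, f - x}) \ {f} :=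
    Set.diff_diff_comm
  rw [hcomm]
  have hfB : f ∈ PF S \ {x, f - x} := by
    refine ⟨hfPFS, ?_⟩
    simp only [Set.mem_insert_iff, Set.mem_singleton_iff, not_or]
    exact ⟨fun hc => hxf hc.symm, hffx⟩
  constructor
  · intro heq
    ext h
    by_cases hhf : h = f
    · subst hhf; simp [hfPFT, hfB]
    · constructor
      · intro hh
        have : h ∈ PF T \ {f} := ⟨hh, hhf⟩
        rw [heq] at this; exact this.1
      · intro hh
        have : h ∈ (PF S \ {x, f - x}) \ {f} := ⟨hh, hhf⟩
        rw [← heq] at this; exact this.1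
  · intro heq
    rw [heq]
end

section
/- Let T ⊆ ℕ_0^d be an almost symmetric GNS with Frobenius element f, and let x be a minimal generator of T with x ≤ f (componentwise; note x ≠ f since f ∉ T), so that T ∖ {x} is again a GNS. Then T ∖ {x} is almost symmetric if and only if f − x ∈ PF(T ∖ {x}); and in that case PF(T) = PF(T ∖ {x}) ∖ {x, f − x}. -/
open scoped BigOperators

namespace Stmt16

variable {d : ℕ}

lemma gaps_le {T : Set (Fin d → ℕ)} {f : Fin d → ℕ} (hT : IsGNS T)
    (hf : IsFrobenius T f) {h : Fin d → ℕ} (hh : h ∉ T) : h ≤ f := by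
  have hCfin : ({b ∈ Tᶜ | h ≤ b}).Finite := hT.2.2.subset (fun b hb => hb.1)
  obtain ⟨a, ha, hmax⟩ := Set.Finite.exists_maximalFor id _ hCfin ⟨h, hh, le_refl h⟩
  have haM : a ∈ Maximals (· ≤ ·) Tᶜ := by
    refine ⟨ha.1, fun b hb hab => ?_⟩
    exact le_antisymm hab (hmax (j := b) ⟨hb, ha.2.trans hab⟩ hab)
  have haf : a = f := by
    have h2 : a ∈ ({f} : Set (Fin d → ℕ)) := hf ▸ haM
    exact h2
  exact haf ▸ ha.2

lemma f_not_mem {T : Set (Fin d → ℕ)} {f : Fin d → ℕ} (hf : IsFrobenius T f) : f ∉ T := by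
  have h2 : f ∈ Maximals (· ≤ ·) Tᶜ := by rw [hf]; rfl
  exact h2.1

lemma f_mem_PF {T : Set (Fin d → ℕ)} {f : Fin d → ℕ} (hT : IsGNS T)
    (hf : IsFrobenius T f) : f ∈ PF T := by
  refine ⟨f_not_mem hf, fun s hs hs0 => ?_⟩
  by_contra hc
  apply hs0
  have hle := gaps_le hT hf hc
  funext i
  have h2 : f i + s i ≤ f i := hle i
  simp only [Pi.zero_apply]
  omega

lemma char {T : Set (Fin d → ℕ)} {f : Fin d → ℕ} (hT : IsGNS T) (hf : IsFrobenius T f) :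
    AlmostSymmetric T ↔ ∀ h, h ∉ T → h ∉ PF T → f - h ∈ T := by
  obtain ⟨h0, hadd, hfin⟩ := hT
  have hT' : IsGNS T := ⟨h0, hadd, hfin⟩
  have hfT : f ∉ T := f_not_mem hf
  set B : Set (Fin d → ℕ) := Set.Iic f with hB
  have eB : B ≃ (∀ i, Fin (f i + 1)) :=
    { toFun := fun v i => ⟨v.1 i, Nat.lt_succ_of_le (v.2 i)⟩
      invFun := fun w => ⟨fun i => (w i).1, fun i => Nat.lt_succ_iff.mp (w i).2⟩
      left_inv := fun v => rfl
      right_inv := fun w => rfl }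
  have hBfin : B.Finite := Set.finite_Iic f
  have cardB : B.ncard = ∏ i, (f i + 1) := by
    rw [← Nat.card_coe_set_eq]
    calc Nat.card B = Nat.card (∀ i, Fin (f i + 1)) := Nat.card_congr eB
    _ = ∏ i, (f i + 1) := by simp [Nat.card_pi]
  have hHsub : Tᶜ ⊆ B := fun h hh => gaps_le hT' hf hh
  set N : Set (Fin d → ℕ) := T ∩ B with hN
  have hNfin : N.Finite := hBfin.subset Set.inter_subset_right
  have hBsplit : B = N ∪ Tᶜ := by
    ext v
    constructor
    · intro hv
      by_cases hvT : v ∈ T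
      · exact Or.inl ⟨hvT, hv⟩
      · exact Or.inr hvT
    · rintro (⟨_, hv⟩ | hv)
      · exact hv
      · exact hHsub hv
  have hdisj : Disjoint N Tᶜ := by
    rw [Set.disjoint_left]
    rintro v ⟨hvT, _⟩ hvc
    exact hvc hvT
  have cardsplit : B.ncard = N.ncard + Tᶜ.ncard := by
    rw [hBsplit, Set.ncard_union_eq hdisj hNfin hfin]
  set Φ : Set (Fin d → ℕ) := (fun v => f - v) '' N with hΦ
  have hΦH : Φ ⊆ Tᶜ := by
    rintro _ ⟨s, ⟨hsT, hsB⟩, rfl⟩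
    intro hcon
    apply hfT
    have hsB' : s ≤ f := hsB
    have heq : s + (f - s) = f := by
      funext i
      have h9 : s i ≤ f i := hsB' i
      simp only [Pi.add_apply, Pi.sub_apply]
      omega
    exact heq ▸ hadd s (f - s) hsT hcon
  have cardΦ : Φ.ncard = N.ncard := by
    apply Set.ncard_image_of_injOn
    rintro a ⟨_, haB⟩ b ⟨_, hbB⟩ hab
    have haB' : a ≤ f := haB
    have hbB' : b ≤ f := hbB
    funext i
    have h1 := congrFun hab i
    have h2 : a i ≤ f i := haB' i
    have h3 : b i ≤ f i := hbB' i
    simp only [Pi.sub_apply] at h1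
    omega
  have hΦfin : Φ.Finite := hfin.subset hΦH
  have hPFf : f ∈ PF T := f_mem_PF hT' hf
  have hPFsub : PF T \ {f} ⊆ Tᶜ \ Φ := by
    rintro h ⟨⟨hhT, hPF⟩, hhf⟩
    refine ⟨hhT, ?_⟩
    rintro ⟨s, ⟨hsT, hsB⟩, rfl⟩
    by_cases hs0 : s = 0
    · apply hhf
      subst hs0
      simp
    · apply hfT
      have hsB' : s ≤ f := hsB
      have h2 : (f - s) + s = f := by
        funext i
        have h9 : s i ≤ f i := hsB' i
        simp only [Pi.add_apply, Pi.sub_apply]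
        omega
      exact h2 ▸ hPF s hsT hs0
  have hfΦ : f ∈ Φ := ⟨0, ⟨h0, fun i => Nat.zero_le _⟩, by funext i; simp⟩
  have hPFfin : (PF T).Finite := hfin.subset (fun h hh => hh.1)
  have typ_split : typ T = (PF T \ {f}).ncard + 1 := by
    have hins : PF T = insert f (PF T \ {f}) := by
      rw [Set.insert_diff_singleton, Set.insert_eq_self.mpr hPFf]
    have h2 := Set.ncard_insert_of_notMem (a := f) (s := PF T \ {f}) (by simp) (hPFfin.diff)
    rw [← hins] at h2
    exact h2
  have cardH_split : Tᶜ.ncard = (Tᶜ \ Φ).ncard + Φ.ncard := by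
    conv_lhs => rw [← Set.diff_union_of_subset hΦH]
    exact Set.ncard_union_eq Set.disjoint_sdiff_left (hfin.diff) hΦfin
  have e1 : genus T = Tᶜ.ncard := rfl
  constructor
  · rintro ⟨h, hhT, heq⟩ h' hh'T hh'PF
    have hle1 : (PF T \ {f}).ncard ≤ (Tᶜ \ Φ).ncard :=
      Set.ncard_le_ncard hPFsub (hfin.diff)
    have hle2 : ∏ i, (h i + 1) ≤ ∏ i, (f i + 1) := by
      apply Finset.prod_le_prod (fun i _ => Nat.zero_le _) (fun i _ => ?_)
      have h9 : h i ≤ f i := gaps_le hT' hf hhT i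
      omega
    have key : (PF T \ {f}).ncard = (Tᶜ \ Φ).ncard := by omega
    have hset : PF T \ {f} = Tᶜ \ Φ :=
      Set.eq_of_subset_of_ncard_le hPFsub (le_of_eq key.symm) (hfin.diff)
    have hh'Φ : h' ∈ Φ := by
      by_contra hcon
      have : h' ∈ PF T \ {f} := hset ▸ (⟨hh'T, hcon⟩ : h' ∈ Tᶜ \ Φ)
      exact hh'PF this.1
    obtain ⟨s, ⟨hsT, hsB⟩, hfs⟩ := hh'Φ
    have hsB' : s ≤ f := hsB
    have heq2 : f - h' = s := by
      funext i
      have h1 := congrFun hfs i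
      have h2 : s i ≤ f i := hsB' i
      simp only [Pi.sub_apply] at h1 ⊢
      omega
    rw [heq2]
    exact hsT
  · intro hP
    refine ⟨f, hfT, ?_⟩
    have hsub2 : Tᶜ \ Φ ⊆ PF T \ {f} := by
      rintro h ⟨hhT, hhΦ⟩
      have hhle : h ≤ f := Set.mem_Iic.mp (hHsub hhT)
      constructor
      · by_contra hcon
        have hft := hP h hhT hcon
        apply hhΦ
        refine ⟨f - h, ⟨hft, fun i => Nat.sub_le _ _⟩, ?_⟩
        funext i
        have h9 : h i ≤ f i := hhle i
        simp only [Pi.sub_apply]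
        omega
      · intro hfeq
        rw [Set.mem_singleton_iff] at hfeq
        exact hhΦ (hfeq ▸ hfΦ)
    have hset : PF T \ {f} = Tᶜ \ Φ := Set.Subset.antisymm hPFsub hsub2
    have key := congrArg Set.ncard hset
    omega

end Stmt16

/-- for an almost symmetric GNS `(T,f)` and a minimal generator `x ≤ f`,
`T ∖ {x}` is almost symmetric iff `f - x ∈ PF(T ∖ {x})`; in that case
`PF(T) = PF(T ∖ {x}) ∖ {x, f - x}`. -/



theorem statement16 (d : ℕ) (hd : 0 < d) (T : Set (Fin d → ℕ)) (hT : IsGNS T)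
    (f : Fin d → ℕ) (hf : IsFrobenius T f) (hAS : AlmostSymmetric T)
    (x : Fin d → ℕ) (hx : IsMinGen T x) (hxf : x ≤ f) :
    (AlmostSymmetric (T \ {x}) ↔ f - x ∈ PF (T \ {x})) ∧
    (AlmostSymmetric (T \ {x}) → PF T = PF (T \ {x}) \ {x, f - x}) := by
  obtain ⟨hx0T, hxne0, hxmin⟩ := hx
  obtain ⟨h0T, haddT, hfinT⟩ := hT
  have hT' : IsGNS T := ⟨h0T, haddT, hfinT⟩
  have hfT : f ∉ T := Stmt16.f_not_mem hf
  set S : Set (Fin d → ℕ) := T \ {x} with hS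
  have hxS : x ∉ S := fun h => h.2 rfl
  have hSsubT : S ⊆ T := Set.diff_subset
  have hScompl : Sᶜ = Tᶜ ∪ {x} := by
    ext v
    simp only [hS, Set.mem_compl_iff, Set.mem_diff, Set.mem_union, Set.mem_singleton_iff]
    tauto
  have hGNS_S : IsGNS S := by
    refine ⟨⟨h0T, fun h => hxne0 (Set.mem_singleton_iff.mp h).symm⟩, ?_, ?_⟩
    · rintro y z ⟨hyT, hyx⟩ ⟨hzT, hzx⟩
      refine ⟨haddT y z hyT hzT, ?_⟩
      intro hc
      rw [Set.mem_singleton_iff] at hc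
      by_cases hy0 : y = 0
      · subst hy0; rw [zero_add] at hc; exact hzx hc
      · by_cases hz0 : z = 0
        · subst hz0; rw [add_zero] at hc; exact hyx hc
        · exact hxmin y hyT z hzT hy0 hz0 hc
    · rw [hScompl]
      exact hfinT.union (Set.finite_singleton x)
  have hxnef : x ≠ f := fun h => hfT (h ▸ hx0T)
  have hFrobS : IsFrobenius S f := by
    have hgapS : ∀ a, a ∈ Sᶜ → a ≤ f := by
      intro a ha
      rw [hScompl] at ha
      rcases ha with ha | ha
      · exact Stmt16.gaps_le hT' hf ha
      · rw [Set.mem_singleton_iff] at ha; exact ha ▸ hxf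
    have hfSc : f ∈ Sᶜ := by
      rw [hScompl]; exact Or.inl hfT
    ext a
    simp only [Set.mem_singleton_iff]
    constructor
    · rintro ⟨haSc, hamax⟩
      exact hamax f hfSc (hgapS a haSc)
    · rintro rfl
      exact ⟨hfSc, fun b hb hfb => le_antisymm hfb (hgapS b hb)⟩
  have hfx0 : f - x ≠ 0 := by
    intro hz
    apply hxnef
    funext i
    have h1 := congrFun hz i
    have h2 : x i ≤ f i := hxf i
    simp only [Pi.sub_apply, Pi.zero_apply] at h1
    omega
  have hxfx : x + (f - x) = f := by
    funext i
    have h2 : x i ≤ f i := hxf i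
    simp only [Pi.add_apply, Pi.sub_apply]
    omega
  have hfxT : f - x ∉ T := fun hc => hfT (hxfx ▸ haddT x (f - x) hx0T hc)
  have hfxS : f - x ∉ S := fun hc => hfxT hc.1
  have hxPFS : x ∈ PF S := by
    refine ⟨hxS, fun s hsS hs0 => ⟨haddT x s hx0T hsS.1, ?_⟩⟩
    intro hc
    rw [Set.mem_singleton_iff] at hc
    apply hs0
    funext i
    have h1 := congrFun hc i
    simp only [Pi.add_apply] at h1
    simp only [Pi.zero_apply]
    omega
  have hPFTsub : f - x ∈ PF S → PF T ⊆ PF S := by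
    rintro hPFS h ⟨hhT, hPFh⟩
    refine ⟨fun hc => hhT hc.1, fun s hsS hs0 => ⟨hPFh s hsS.1 hs0, fun hc => ?_⟩⟩
    rw [Set.mem_singleton_iff] at hc
    have hhf : h ≠ f := by
      intro he
      apply hs0
      funext i
      have h1 := congrFun hc i
      have h2 : x i ≤ f i := hxf i
      have h3 := congrFun he i
      simp only [Pi.add_apply] at h1
      simp only [Pi.zero_apply]
      omega
    have hhle : h ≤ f := Stmt16.gaps_le hT' hf hhT
    have hfhT : f - h ∉ T := by
      intro hcT
      apply hfT
      have hne : f - h ≠ 0 := by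
        intro hz
        apply hhf
        funext i
        have h1 := congrFun hz i
        have h2 : h i ≤ f i := hhle i
        simp only [Pi.sub_apply, Pi.zero_apply] at h1
        omega
      have h3 := hPFh (f - h) hcT hne
      have heq : h + (f - h) = f := by
        funext i
        have h2 : h i ≤ f i := hhle i
        simp only [Pi.add_apply, Pi.sub_apply]
        omega
      exact heq ▸ h3
    apply hfhT
    have heq2 : f - h = (f - x) + s := by
      funext i
      have h1 := congrFun hc i
      have h2 : x i ≤ f i := hxf i
      simp only [Pi.add_apply] at h1
      simp only [Pi.sub_apply, Pi.add_apply]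
      omega
    rw [heq2]
    exact ((hPFS.2 s hsS hs0).1 : (f - x) + s ∈ T)
  have charS := Stmt16.char hGNS_S hFrobS
  have charT := Stmt16.char hT' hf
  have asT := charT.mp hAS
  have iff1 : AlmostSymmetric S ↔ f - x ∈ PF S := by
    constructor
    · intro hASS
      have hP := charS.mp hASS
      by_contra hcon
      have h3 := hP (f - x) hfxS hcon
      have heq : f - (f - x) = x := by
        funext i
        have h2 : x i ≤ f i := hxf i
        simp only [Pi.sub_apply]
        omega
      rw [heq] at h3
      exact hxS h3
    · intro hPFS
      apply charS.mpr
      intro h hhS hhPFS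
      by_cases hhx : h = x
      · exact absurd (by rw [hhx]; exact hxPFS) hhPFS
      · have hhT : h ∉ T := fun hc => hhS ⟨hc, hhx⟩
        have hhPF : h ∉ PF T := fun hc => hhPFS (hPFTsub hPFS hc)
        have hfhT := asT h hhT hhPF
        refine ⟨hfhT, ?_⟩
        intro hc
        rw [Set.mem_singleton_iff] at hc
        apply hhPFS
        have heq : h = f - x := by
          funext i
          have h1 := congrFun hc i
          have h2 : h i ≤ f i := (Stmt16.gaps_le hT' hf hhT) i
          have h3 : x i ≤ f i := hxf i
          simp only [Pi.sub_apply] at h1 ⊢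
          omega
        rw [heq]
        exact hPFS
  refine ⟨iff1, fun hASS => ?_⟩
  have hPFS := iff1.mp hASS
  ext h
  simp only [Set.mem_diff, Set.mem_insert_iff, Set.mem_singleton_iff]
  constructor
  · intro hPF
    refine ⟨hPFTsub hPFS hPF, ?_⟩
    push_neg
    constructor
    · intro hc
      exact hPF.1 (by rw [hc]; exact hx0T)
    · intro hc
      apply hfT
      have heq : (f - x) + x = f := by
        funext i
        have h2 : x i ≤ f i := hxf i
        simp only [Pi.add_apply, Pi.sub_apply]
        omega
      have h3 := hPF.2 x hx0T hxne0
      rw [hc] at h3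
      exact heq ▸ h3
  · rintro ⟨hhPFS, hne⟩
    obtain ⟨hne1, hne2⟩ := not_or.mp hne
    have hhT : h ∉ T := fun hc => hhPFS.1 ⟨hc, hne1⟩
    have hhle : h ≤ f := Stmt16.gaps_le hT' hf hhT
    by_cases hPFT : h ∈ PF T
    · exact hPFT
    · exfalso
      have hfh := asT h hhT hPFT
      by_cases hz : f - h = 0
      · apply hPFT
        have heq : h = f := by
          funext i
          have h1 := congrFun hz i
          have h2 : h i ≤ f i := hhle i
          simp only [Pi.sub_apply, Pi.zero_apply] at h1
          omega
        rw [heq]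
        exact Stmt16.f_mem_PF hT' hf
      · have hfhx : f - h ≠ x := by
          intro hc
          apply hne2
          funext i
          have h1 := congrFun hc i
          have h2 : h i ≤ f i := hhle i
          have h3 : x i ≤ f i := hxf i
          simp only [Pi.sub_apply] at h1 ⊢
          omega
        have hfhS : f - h ∈ S := ⟨hfh, hfhx⟩
        have h4 := (hhPFS.2 (f - h) hfhS hz).1
        apply hfT
        have heq : h + (f - h) = f := by
          funext i
          have h2 : h i ≤ f i := hhle i
          simp only [Pi.add_apply, Pi.sub_apply]
          omega
        exact heq ▸ h4
end

section
/- Let T ⊆ ℕ_0^d be a nonordinary almost symmetric GNS with Frobenius element f, let ≺ be a monomial order on ℕ_0^d, and let x = low_≺(T) be the ≺-minimum of the (nonempty) set {z ∈ T : z ≠ 0 and z ≤ f}. Then x is a minimal generator of T, f − x ∈ PF(T ∖ {x}), and T ∖ {x} is an almost symmetric GNS (with Frobenius element f). -/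
open scoped BigOperators

section S17aux

variable {d : ℕ}

/-- Every gap lies below the Frobenius element. -/
lemma s17_gaps_le {T : Set (Fin d → ℕ)} (hfin : Tᶜ.Finite) {f : Fin d → ℕ}
    (hf : IsFrobenius T f) {h : Fin d → ℕ} (hh : h ∉ T) : h ≤ f := by
  classical
  have hsfin : ({y ∈ Tᶜ | h ≤ y}).Finite := hfin.subset (fun y hy => hy.1)
  obtain ⟨a, ha, hamax⟩ : ∃ a ∈ {y ∈ Tᶜ | h ≤ y}, ∀ y ∈ {y ∈ Tᶜ | h ≤ y}, a ≤ y → a = y := by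
    obtain ⟨a, ha, hm⟩ := Set.Finite.exists_maximalFor id _ hsfin ⟨h, hh, le_refl h⟩
    exact ⟨a, ha, fun y hy hay => le_antisymm hay (hm hy hay)⟩
  have hmem : a ∈ Maximals (· ≤ ·) Tᶜ := by
    refine ⟨ha.1, fun y hy hay => ?_⟩
    exact hamax y ⟨hy, le_trans ha.2 hay⟩ hay
  rw [hf] at hmem
  exact hmem ▸ ha.2

lemma s17_f_gap {T : Set (Fin d → ℕ)} {f : Fin d → ℕ}
    (hf : IsFrobenius T f) : f ∉ T := by
  have h : f ∈ ({f} : Set (Fin d → ℕ)) := rfl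
  rw [← hf] at h
  exact h.1

/-- The key counting consequence of almost symmetry. -/
lemma s17_counting {T : Set (Fin d → ℕ)} (hT : IsGNS T) {f : Fin d → ℕ}
    (hf : IsFrobenius T f) (hAS : AlmostSymmetric T) :
    (∀ z, z ∉ T → f - z ∉ T → z ∈ PF T) ∧
      2 * genus T + 1 = typ T + ∏ i, (f i + 1) := by
  classical
  obtain ⟨h0, h0T, h0eq⟩ := hAS
  have hfin : Tᶜ.Finite := hT.2.2
  have hfT : f ∉ T := s17_f_gap hf
  set B : Set (Fin d → ℕ) := Set.Iic f with hB
  have hBfin : B.Finite := Set.finite_Iic f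
  have hBTfin : (B ∩ T).Finite := hBfin.inter_of_left T
  have hHsub : Tᶜ ⊆ B := fun h hh => s17_gaps_le hfin hf hh
  have hBsplit : B = (B ∩ T) ∪ Tᶜ := by
    ext z
    constructor
    · intro hz
      by_cases hc : z ∈ T
      · exact Or.inl ⟨hz, hc⟩
      · exact Or.inr hc
    · rintro (hz | hz)
      · exact hz.1
      · exact hHsub hz
  have hBdisj : Disjoint (B ∩ T) Tᶜ := by
    rw [Set.disjoint_left]
    exact fun z hz hz' => hz' hz.2
  have hBcard : B.ncard = (B ∩ T).ncard + Tᶜ.ncard := by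
    have h2 := Set.ncard_union_eq hBdisj hBTfin hfin
    rw [← hBsplit] at h2
    exact h2
  set φ : (Fin d → ℕ) → (Fin d → ℕ) := fun z => f - z with hφ
  have hinj : Set.InjOn φ (B ∩ T) := by
    intro a ha b hb hab
    have ha' : a ≤ f := ha.1
    have hb' : b ≤ f := hb.1
    calc a = f - (f - a) := (tsub_tsub_cancel_of_le ha').symm
    _ = f - (f - b) := by rw [show f - a = f - b from hab]
    _ = b := tsub_tsub_cancel_of_le hb'
  have himg : φ '' (B ∩ T) ⊆ Tᶜ := by
    rintro _ ⟨z, hz, rfl⟩ hmem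
    have hzf : z ≤ f := hz.1
    have : z + (f - z) = f := add_tsub_cancel_of_le hzf
    exact hfT (this ▸ hT.2.1 z (f - z) hz.2 hmem)
  set A : Set (Fin d → ℕ) := {h | h ∉ T ∧ f - h ∉ T} with hA
  have hAfin : A.Finite := hfin.subset (fun z hz => hz.1)
  have hsplit : Tᶜ = (φ '' (B ∩ T)) ∪ A := by
    ext h
    constructor
    · intro hh
      by_cases hc : f - h ∈ T
      · exact Or.inl ⟨f - h, ⟨Set.mem_Iic.mpr tsub_le_self, hc⟩,
          tsub_tsub_cancel_of_le (hHsub hh)⟩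
      · exact Or.inr ⟨hh, hc⟩
    · rintro (hh | hh)
      · exact himg hh
      · exact hh.1
  have hdisj2 : Disjoint (φ '' (B ∩ T)) A := by
    rw [Set.disjoint_left]
    rintro _ ⟨z, hz, rfl⟩ hmem
    apply hmem.2
    show f - (f - z) ∈ T
    rw [tsub_tsub_cancel_of_le hz.1]
    exact hz.2
  have hHcard : Tᶜ.ncard = (B ∩ T).ncard + A.ncard := by
    rw [hsplit, Set.ncard_union_eq hdisj2 (hBTfin.image φ) hAfin,
      Set.ncard_image_of_injOn hinj]
  have hfPF : f ∈ PF T := by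
    refine ⟨hfT, fun s hs hs0 => ?_⟩
    by_contra hc
    have h1 : f + s ≤ f := s17_gaps_le hfin hf hc
    have h2 : f + s = f := le_antisymm h1 le_self_add
    exact hs0 (add_eq_left.mp h2)
  have hPFfin : (PF T).Finite := hfin.subset (fun z hz => hz.1)
  have hPFsub : PF T \ {f} ⊆ A := by
    rintro p ⟨hp, hpf⟩
    refine ⟨hp.1, fun hc => ?_⟩
    have hple : p ≤ f := s17_gaps_le hfin hf hp.1
    have hne : (f - p) ≠ 0 := by
      intro h0
      exact hpf (le_antisymm hple (tsub_eq_zero_iff_le.mp h0))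
    have := hp.2 (f - p) hc hne
    rw [add_tsub_cancel_of_le hple] at this
    exact hfT this
  have hfA : f ∉ A := by
    intro hmem
    exact hmem.2 (by simpa using hT.1)
  have htcard : typ T = (PF T \ {f}).ncard + 1 := by
    have h1 : PF T = insert f (PF T \ {f}) := by
      rw [Set.insert_diff_singleton, Set.insert_eq_of_mem hfPF]
    have h2 := Set.ncard_insert_of_notMem (show f ∉ PF T \ {f} by simp)
      (hPFfin.diff (t := {f}))
    rw [← h1] at h2
    exact h2
  have hPFle : (PF T \ {f}).ncard ≤ A.ncard := Set.ncard_le_ncard hPFsub hAfin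
  have hh0le : h0 ≤ f := s17_gaps_le hfin hf h0T
  have hprod : ∏ i, (h0 i + 1) ≤ ∏ i, (f i + 1) :=
    Finset.prod_le_prod (fun i _ => Nat.zero_le _)
      (fun i _ => Nat.add_le_add_right (hh0le i) 1)
  have hBval : B.ncard = ∏ i, (f i + 1) := by
    rw [hB, ← Finset.coe_Iic, Set.ncard_coe_finset, Pi.card_Iic]
    simp [Nat.card_Iic]
  have hgen : genus T = Tᶜ.ncard := rfl
  have harith : (PF T \ {f}).ncard = A.ncard ∧
      2 * genus T + 1 = typ T + ∏ i, (f i + 1) := by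
    generalize hP0 : ∏ i, (h0 i + 1) = P0 at h0eq hprod
    generalize hPf : ∏ i, (f i + 1) = Pf at hprod hBval ⊢
    omega
  obtain ⟨key1, key2⟩ := harith
  have hAeq : PF T \ {f} = A :=
    Set.eq_of_subset_of_ncard_le hPFsub (le_of_eq key1.symm) hAfin
  refine ⟨fun z hz hz2 => ?_, key2⟩
  have : z ∈ A := ⟨hz, hz2⟩
  rw [← hAeq] at this
  exact this.1

end S17aux

/-- for a nonordinary almost symmetric GNS `(T,f)` and
`x = low_≺(T)`, `x` is a minimal generator, `f - x ∈ PF(T ∖ {x})`, and `T ∖ {x}`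
is an almost symmetric GNS with Frobenius element `f`. -/
theorem statement17 (d : ℕ) (hd : 0 < d) (T : Set (Fin d → ℕ)) (hT : IsGNS T)
    (f : Fin d → ℕ) (hf : IsFrobenius T f) (hAS : AlmostSymmetric T)
    (lt : (Fin d → ℕ) → (Fin d → ℕ) → Prop) (hlt : IsMonomialOrder d lt)
    (x : Fin d → ℕ) (hxT : x ∈ T) (hx0 : x ≠ 0) (hxf : x ≤ f)
    (hmin : ∀ z ∈ T, z ≠ 0 → z ≤ f → z = x ∨ lt x z) :
    IsMinGen T x ∧ f - x ∈ PF (T \ {x}) ∧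
      AlmostSymmetric (T \ {x}) ∧ IsFrobenius (T \ {x}) f := by
  classical
  have hfT : f ∉ T := s17_f_gap hf
  have hgle : ∀ h, h ∉ T → h ≤ f := fun h hh => s17_gaps_le hT.2.2 hf hh
  obtain ⟨star, eqT⟩ := s17_counting hT hf hAS
  -- the minimality property of x
  have Lmin : ∀ s ∈ T, s ≠ 0 → s ≤ x → s = x := by
    intro s hs hs0 hsx
    rcases hmin s hs hs0 (le_trans hsx hxf) with h | h
    · exact h
    · exfalso
      by_cases hsx' : s = x
      · exact hlt.1 x (hsx' ▸ h)
      · have hxs : x - s ≠ 0 := fun h0 =>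
          hsx' (le_antisymm hsx (tsub_eq_zero_iff_le.mp h0))
        have h1 : lt 0 (x - s) := hlt.2.2.2.2 _ hxs
        have h2 : lt (0 + s) ((x - s) + s) := hlt.2.2.2.1 s _ _ h1
        rw [zero_add, tsub_add_cancel_of_le hsx] at h2
        exact hlt.1 x (hlt.2.1 _ _ _ h h2)
  have hfxT : f - x ∉ T := by
    intro hc
    apply hfT
    rw [← add_tsub_cancel_of_le hxf]
    exact hT.2.1 x (f - x) hxT hc
  -- part 1 : minimal generator
  have part1 : IsMinGen T x := by
    refine ⟨hxT, hx0, fun y hy z hz hy0 hz0 hyz => ?_⟩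
    have hyx : y = x := Lmin y hy hy0 (hyz ▸ le_self_add)
    rw [hyx] at hyz
    exact hz0 (add_left_cancel (hyz.trans (add_zero x).symm))
  -- part 2 : f - x ∈ PF (T \ {x})
  have part2 : f - x ∈ PF (T \ {x}) := by
    refine ⟨fun hc => hfxT hc.1, ?_⟩
    rintro s ⟨hsT, hsx⟩ hs0
    have hsx' : s ≠ x := fun h => hsx h
    have hin : f - x + s ∈ T := by
      by_contra hc
      have h1 : f - x + s ≤ f := hgle _ hc
      have h2 : s ≤ x := by
        have h3 := le_tsub_of_add_le_left h1
        rwa [tsub_tsub_cancel_of_le hxf] at h3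
      exact hsx' (Lmin s hsT hs0 h2)
    refine ⟨hin, fun hc => ?_⟩
    have hc' : f - x + s = x := hc
    have h2 : s ≤ x := hc' ▸ le_add_self
    have h3 : s = x := Lmin s hsT hs0 h2
    rw [h3, tsub_add_cancel_of_le hxf] at hc'
    exact hfT (hc'.symm ▸ hxT)
  -- PF T ⊆ PF (T \ {x})
  have hPFsub' : PF T ⊆ PF (T \ {x}) := by
    rintro p ⟨hpT, hp⟩
    refine ⟨fun hc => hpT hc.1, ?_⟩
    rintro s ⟨hsT, hsx⟩ hs0
    refine ⟨hp s hsT hs0, fun hc => ?_⟩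
    have hc' : p + s = x := hc
    have h3 : s = x := Lmin s hsT hs0 (hc' ▸ le_add_self)
    rw [h3] at hc'
    exact hpT ((add_eq_right.mp hc') ▸ hT.1)
  -- x ∈ PF (T \ {x})
  have hxPF : x ∈ PF (T \ {x}) := by
    refine ⟨fun hc => hc.2 rfl, ?_⟩
    rintro s ⟨hsT, hsx⟩ hs0
    refine ⟨hT.2.1 x s hxT hsT, fun hc => ?_⟩
    exact hs0 (add_eq_left.mp hc)
  have h2x : x + x ∈ T := hT.2.1 x x hxT hxT
  have hfne2x : f - x ≠ x := by
    intro h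
    apply hfT
    rw [← tsub_add_cancel_of_le hxf, h]
    exact h2x
  -- PF (T \ {x}) ⊆ {x, f-x} ∪ PF T
  have hPFsup : PF (T \ {x}) ⊆ insert x (insert (f - x) (PF T)) := by
    intro p hp
    by_cases hpx : p = x
    · exact hpx ▸ Set.mem_insert _ _
    by_cases hpfx : p = f - x
    · exact Set.mem_insert_of_mem _ (hpfx ▸ Set.mem_insert _ _)
    have hpT : p ∉ T := fun hc => hp.1 ⟨hc, hpx⟩
    refine Set.mem_insert_of_mem _ (Set.mem_insert_of_mem _ ⟨hpT, ?_⟩)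
    intro s hsT hs0
    by_cases hsx : s = x
    · subst hsx
      by_contra hpxT
      have hpf : p ≤ f := hgle p hpT
      have hpfne : p ≠ f := by
        intro h
        subst h
        have h1 : p + s ≤ p := hgle _ hpxT
        exact hs0 (add_eq_left.mp (le_antisymm h1 le_self_add))
      have hv0 : f - p ≠ 0 := fun h =>
        hpfne (le_antisymm hpf (tsub_eq_zero_iff_le.mp h))
      have hvx : f - p ≠ s := by
        intro h
        apply hpfx
        have h1 : p + (f - p) = f := add_tsub_cancel_of_le hpf
        rw [h] at h1
        exact eq_tsub_of_add_eq h1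
      by_cases hvT : f - p ∈ T
      · have h1 := hp.2 (f - p) ⟨hvT, fun h => hvx h⟩ hv0
        have h2 : p + (f - p) = f := add_tsub_cancel_of_le hpf
        exact hfT (h2 ▸ h1.1)
      · exact hpxT ((star p hpT hvT).2 s hxT hs0)
    · exact (hp.2 s ⟨hsT, fun h => hsx h⟩ hs0).1
  have hPFeq : PF (T \ {x}) = insert x (insert (f - x) (PF T)) := by
    refine subset_antisymm hPFsup ?_
    intro p hp
    rcases hp with rfl | hp
    · exact hxPF
    rcases hp with rfl | hp
    · exact part2
    · exact hPFsub' hp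
  have hPFfin : (PF T).Finite := hT.2.2.subset (fun z hz => hz.1)
  have hxnotPF : x ∉ PF T := fun h => h.1 hxT
  have hfxnotPF : f - x ∉ PF T := by
    intro h
    apply hfT
    rw [← tsub_add_cancel_of_le hxf]
    exact h.2 x hxT hx0
  have htyp' : typ (T \ {x}) = typ T + 2 := by
    have hxnot : x ∉ insert (f - x) (PF T) := by
      intro h
      rcases h with h | h
      · exact hfne2x h.symm
      · exact hxnotPF h
    have h1 : typ (T \ {x}) = (insert x (insert (f - x) (PF T))).ncard := by
      rw [typ, hPFeq]
    rw [h1, Set.ncard_insert_of_notMem hxnot (hPFfin.insert _),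
      Set.ncard_insert_of_notMem hfxnotPF hPFfin]
    rfl
  have hcompl : (T \ {x})ᶜ = insert x Tᶜ := by
    ext z
    simp only [Set.mem_compl_iff, Set.mem_diff, Set.mem_insert_iff,
      Set.mem_singleton_iff, not_and, not_not]
    constructor
    · intro h
      by_cases hz : z ∈ T
      · exact Or.inl (h hz)
      · exact Or.inr hz
    · rintro (rfl | h)
      · intro _; rfl
      · intro hz; exact absurd hz h
  have hgen' : genus (T \ {x}) = genus T + 1 := by
    have h1 : genus (T \ {x}) = (insert x Tᶜ).ncard := by rw [genus, hcompl]
    rw [h1, Set.ncard_insert_of_notMem (fun h =>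
      ((Set.mem_compl_iff T x).mp h) hxT) hT.2.2]
    rfl
  have part3 : AlmostSymmetric (T \ {x}) := by
    refine ⟨f, fun hc => hfT hc.1, ?_⟩
    rw [hgen', htyp']
    generalize hPf : ∏ i, (f i + 1) = Pf at eqT ⊢
    omega
  have part4 : IsFrobenius (T \ {x}) f := by
    rw [IsFrobenius, hcompl]
    ext y
    simp only [Set.mem_singleton_iff]
    constructor
    · rintro ⟨hy, hymax⟩
      have hyf : y ≤ f := by
        rcases hy with rfl | hy
        · exact hxf
        · exact hgle y hy
      exact hymax f (Set.mem_insert_of_mem _ hfT) hyf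
    · intro hy
      rw [hy]
      refine ⟨Set.mem_insert_of_mem _ hfT, fun z hz hfz => ?_⟩
      have hzf : z ≤ f := by
        rcases hz with rfl | hz
        · exact hxf
        · exact hgle z hz
      exact le_antisymm hfz hzf
  exact ⟨part1, part2, part3, part4⟩
end

section
/- Let (S, f) be a Frobenius GNS in ℕ_0^d. Then S is almost symmetric if and only if there exist an irreducible GNS T with Frobenius element f and a set A of minimal generators of T such that S = T ∖ A and PF(S) = PF(T) ∪ {x : x ∈ A} ∪ {f − x : x ∈ A}. In this case t(S) = 2|A| + t(T). -/
open scoped BigOperators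

namespace St18


variable {d : ℕ}

/-- Lexicographic strict order on `Fin d → ℕ`. -/
def LexLt (x y : Fin d → ℕ) : Prop :=
  ∃ i, x i < y i ∧ ∀ j, j < i → x j = y j

theorem lexLt_irrefl (x : Fin d → ℕ) : ¬ LexLt x x := by
  rintro ⟨i, hi, -⟩; exact lt_irrefl _ hi

theorem lexLt_trans {x y z : Fin d → ℕ} (h1 : LexLt x y) (h2 : LexLt y z) : LexLt x z := by
  obtain ⟨i, hi, hbi⟩ := h1
  obtain ⟨j, hj, hbj⟩ := h2
  rcases lt_trichotomy i j with h | h | h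
  · exact ⟨i, by rw [← hbj i h]; omega, fun k hk => (hbi k hk).trans (hbj k (hk.trans h))⟩
  · subst h; exact ⟨i, hi.trans hj, fun k hk => (hbi k hk).trans (hbj k hk)⟩
  · exact ⟨j, by rw [hbi j h]; exact hj, fun k hk => (hbi k (hk.trans h)).trans (hbj k hk)⟩

theorem lexLt_total {x y : Fin d → ℕ} (h : x ≠ y) : LexLt x y ∨ LexLt y x := by
  have hne : {i ∈ (Finset.univ : Finset (Fin d)) | x i ≠ y i}.Nonempty := by
    by_contra hc
    apply h; funext i
    by_contra hxy
    exact hc ⟨i, by simp [hxy]⟩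
  set s := {i ∈ (Finset.univ : Finset (Fin d)) | x i ≠ y i}
  have hi := s.min'_mem hne
  have hmin : ∀ j ∈ s, s.min' hne ≤ j := fun j hj => s.min'_le j hj
  set i := s.min' hne with hidef
  have hi' : x i ≠ y i := by simpa [s] using hi
  have hbelow : ∀ j, j < i → x j = y j := by
    intro j hj
    by_contra hc
    exact absurd (hmin j (by simp [s, hc])) (not_le.2 hj)
  rcases lt_or_gt_of_ne hi' with h' | h'
  · exact Or.inl ⟨i, h', hbelow⟩
  · exact Or.inr ⟨i, h', fun j hj => (hbelow j hj).symm⟩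

theorem lexLt_add_right {x y : Fin d → ℕ} (u : Fin d → ℕ) (h : LexLt x y) :
    LexLt (x + u) (y + u) := by
  obtain ⟨i, hi, hb⟩ := h
  exact ⟨i, by simpa using hi, fun j hj => by simp [hb j hj]⟩

theorem lexLt_add_left {x y : Fin d → ℕ} (u : Fin d → ℕ) (h : LexLt x y) :
    LexLt (u + x) (u + y) := by
  simpa [add_comm] using lexLt_add_right u h

theorem lexLt_of_pos {x : Fin d → ℕ} (h : x ≠ 0) : LexLt 0 x := by
  rcases lexLt_total h.symm with h' | h'
  · exact h'
  · obtain ⟨i, hi, -⟩ := h'; simp at hi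

theorem lexLt_of_le_of_ne {x y : Fin d → ℕ} (hle : x ≤ y) (hne : x ≠ y) : LexLt x y := by
  rcases lexLt_total hne with h | h
  · exact h
  · obtain ⟨i, hi, -⟩ := h; have h2 : x i ≤ y i := hle i; omega

theorem lexLe_of_le {x y : Fin d → ℕ} (hle : x ≤ y) : x = y ∨ LexLt x y := by
  by_cases h : x = y
  · exact Or.inl h
  · exact Or.inr (lexLt_of_le_of_ne hle h)

theorem lexLt_asymm {x y : Fin d → ℕ} (h : LexLt x y) : ¬ LexLt y x := fun h' =>
  lexLt_irrefl x (lexLt_trans h h')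

theorem lexLt_double {x y : Fin d → ℕ} (h : LexLt x y) : LexLt (x + x) (y + y) :=
  lexLt_trans (lexLt_add_right x h) (lexLt_add_left y h)

theorem lexLt_of_double {x y : Fin d → ℕ} (h : LexLt (x + x) (y + y)) : LexLt x y := by
  rcases eq_or_ne x y with rfl | hne
  · exact absurd h (lexLt_irrefl _)
  · rcases lexLt_total hne with h' | h'
    · exact h'
    · exact absurd (lexLt_double h') (lexLt_asymm h)



variable {d : ℕ}

/-- Gaps `h` of `S` such that `f - h` is also a gap (phrased additively). -/
def Mset (S : Set (Fin d → ℕ)) (f : Fin d → ℕ) : Set (Fin d → ℕ) :=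
  {h | h ∉ S ∧ ∀ t ∈ S, h + t ≠ f}

theorem exists_maximal_above {X : Set (Fin d → ℕ)} (hX : X.Finite) {h : Fin d → ℕ}
    (hh : h ∈ X) : ∃ m ∈ X, h ≤ m ∧ ∀ y ∈ X, m ≤ y → m = y := by
  classical
  set F := hX.toFinset.filter (fun y => h ≤ y) with hF
  have hne : F.Nonempty := ⟨h, by simp [hF, hX.mem_toFinset, hh]⟩
  obtain ⟨m, hm, hmax⟩ : ∃ m ∈ F, ∀ x ∈ F, ¬ m < x := by
    obtain ⟨m, hm⟩ := Finset.exists_maximal hne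
    exact ⟨m, hm.1, fun x hx hlt => hlt.not_ge (hm.2 hx hlt.le)⟩
  rw [hF, Finset.mem_filter, hX.mem_toFinset] at hm
  refine ⟨m, hm.1, hm.2, fun y hy hle => ?_⟩
  have hyF : y ∈ F := by rw [hF, Finset.mem_filter, hX.mem_toFinset]; exact ⟨hy, hm.2.trans hle⟩
  have := hmax y hyF
  exact le_antisymm hle (by by_contra hc; exact this (lt_of_le_not_ge hle hc))

theorem f_gap {S : Set (Fin d → ℕ)} {f : Fin d → ℕ} (hf : IsFrobenius S f) : f ∉ S := by
  have : f ∈ Maximals (· ≤ ·) Sᶜ := by rw [hf]; rfl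
  exact this.1

theorem gap_le {S : Set (Fin d → ℕ)} {f : Fin d → ℕ} (hS : IsGNS S) (hf : IsFrobenius S f)
    {h : Fin d → ℕ} (hh : h ∉ S) : h ≤ f := by
  obtain ⟨m, hm, hhm, hmax⟩ := exists_maximal_above hS.2.2 hh
  have : m ∈ Maximals (· ≤ ·) Sᶜ := ⟨hm, fun y hy hle => hmax y hy hle⟩
  rw [hf] at this
  rw [← this]; exact hhm

theorem f_ne_zero {S : Set (Fin d → ℕ)} {f : Fin d → ℕ} (hS : IsGNS S) (hf : IsFrobenius S f) :
    f ≠ 0 := by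
  intro h; exact f_gap hf (h ▸ hS.1)

theorem not_gap_of_f_le {S : Set (Fin d → ℕ)} {f : Fin d → ℕ} (hS : IsGNS S)
    (hf : IsFrobenius S f) {x : Fin d → ℕ} (hx : f ≤ x) (hne : x ≠ f) : x ∈ S := by
  by_contra hc
  exact hne (le_antisymm (gap_le hS hf hc) hx)

theorem f_mem_PF {S : Set (Fin d → ℕ)} {f : Fin d → ℕ} (hS : IsGNS S) (hf : IsFrobenius S f) :
    f ∈ PF S := by
  refine ⟨f_gap hf, fun s hs hs0 => ?_⟩
  by_contra hc
  have hle : f + s ≤ f := gap_le hS hf hc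
  apply hs0
  funext i
  have h1 : f i + s i ≤ f i := hle i
  simp only [Pi.zero_apply]
  omega

theorem two_f_mem {S : Set (Fin d → ℕ)} {f : Fin d → ℕ} (hS : IsGNS S) (hf : IsFrobenius S f) :
    f + f ∈ S := by
  by_contra hc
  have hle : f + f ≤ f := gap_le hS hf hc
  apply f_ne_zero hS hf
  funext i
  have h1 : f i + f i ≤ f i := hle i
  simp only [Pi.zero_apply]
  omega

theorem f_not_mem_Mset {S : Set (Fin d → ℕ)} {f : Fin d → ℕ} (hS : IsGNS S) :
    f ∉ Mset S f := fun hc => hc.2 0 hS.1 (by simp)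

theorem PF_diff_subset_Mset {S : Set (Fin d → ℕ)} {f : Fin d → ℕ} (hS : IsGNS S)
    (hf : IsFrobenius S f) : PF S \ {f} ⊆ Mset S f := by
  rintro h ⟨⟨hh, hpf⟩, hne⟩
  refine ⟨hh, fun t ht heq => ?_⟩
  rcases eq_or_ne t 0 with rfl | ht0
  · exact hne (by simpa using heq)
  · exact f_gap hf (heq ▸ hpf t ht ht0)

theorem PF_subset_insert {S : Set (Fin d → ℕ)} {f : Fin d → ℕ} (hS : IsGNS S)
    (hf : IsFrobenius S f) : PF S ⊆ insert f (Mset S f) := by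
  intro h hh
  rcases eq_or_ne h f with rfl | hne
  · exact Set.mem_insert _ _
  · exact Set.mem_insert_of_mem _ (PF_diff_subset_Mset hS hf ⟨hh, hne⟩)

theorem Mset_subset_compl {S : Set (Fin d → ℕ)} {f : Fin d → ℕ} : Mset S f ⊆ Sᶜ :=
  fun _ hh => hh.1

theorem Mset_finite {S : Set (Fin d → ℕ)} {f : Fin d → ℕ} (hS : IsGNS S) :
    (Mset S f).Finite := hS.2.2.subset Mset_subset_compl

theorem PF_finite {S : Set (Fin d → ℕ)} (hS : IsGNS S) : (PF S).Finite :=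
  hS.2.2.subset fun _ hh => hh.1

/-- The key counting identity. -/
theorem genus_count {S : Set (Fin d → ℕ)} {f : Fin d → ℕ} (hS : IsGNS S)
    (hf : IsFrobenius S f) :
    2 * genus S = (∏ i, (f i + 1)) + (Mset S f).ncard := by
  classical
  set L : Set (Fin d → ℕ) := {h | h ∉ S ∧ ∃ t ∈ S, h + t = f} with hL
  set B : Set (Fin d → ℕ) := {x | x ≤ f} with hB
  have hBfin : B.Finite := by
    have : B = ↑(Finset.Icc (0 : Fin d → ℕ) f) := by
      ext x; simp only [hB, Set.mem_setOf_eq, Finset.coe_Icc, Set.mem_Icc]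
      exact ⟨fun h => ⟨fun i => Nat.zero_le _, h⟩, fun h => h.2⟩
    rw [this]; exact (Finset.Icc _ _).finite_toSet
  have hBcard : B.ncard = ∏ i, (f i + 1) := by
    have hco : B = ↑(Finset.Icc (0 : Fin d → ℕ) f) := by
      ext x; simp only [hB, Set.mem_setOf_eq, Finset.coe_Icc, Set.mem_Icc]
      exact ⟨fun h => ⟨fun i => Nat.zero_le _, h⟩, fun h => h.2⟩
    rw [hco, Set.ncard_coe_finset, Pi.card_Icc]
    simp [Nat.card_Icc]
  -- Sᶜ = L ∪ M, disjoint
  have hsplit : Sᶜ = L ∪ Mset S f := by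
    ext h
    simp only [Set.mem_compl_iff, hL, Set.mem_union, Set.mem_setOf_eq, Mset, Set.mem_setOf_eq]
    constructor
    · intro hh
      by_cases hex : ∃ t ∈ S, h + t = f
      · exact Or.inl ⟨hh, hex⟩
      · push_neg at hex; exact Or.inr ⟨hh, hex⟩
    · rintro (⟨hh, -⟩ | ⟨hh, -⟩) <;> exact hh
  have hdisj : Disjoint L (Mset S f) := by
    rw [Set.disjoint_left]
    rintro h ⟨-, t, ht, heq⟩ ⟨-, hM⟩
    exact hM t ht heq
  have hLfin : L.Finite := hS.2.2.subset (fun h hh => hh.1)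
  have hgenus : genus S = L.ncard + (Mset S f).ncard := by
    rw [genus, hsplit, Set.ncard_union_eq hdisj hLfin (Mset_finite hS)]
  -- |L| = |S ∩ B| via h ↦ f - h
  have himg : (fun h => f - h) '' L = S ∩ B := by
    ext s
    constructor
    · rintro ⟨h, ⟨hh, t, ht, heq⟩, rfl⟩
      have : f - h = t := by
        funext i
        have := congrFun heq i
        simp only [Pi.add_apply] at this
        simp only [Pi.sub_apply]; omega
      show f - h ∈ S ∩ B
      rw [this]
      refine ⟨ht, fun i => ?_⟩
      have h2 : h i + t i = f i := congrFun heq i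
      show t i ≤ f i
      omega
    · rintro ⟨hs, hsB⟩
      refine ⟨f - s, ⟨fun hc => f_gap hf ?_, s, hs, ?_⟩, ?_⟩
      · have : (f - s) + s = f := by
          funext i; have : s i ≤ f i := hsB i
          simp only [Pi.add_apply, Pi.sub_apply]; omega
        exact this ▸ hS.2.1 _ _ hc hs
      · funext i; have : s i ≤ f i := hsB i
        simp only [Pi.add_apply, Pi.sub_apply]; omega
      · funext i; have : s i ≤ f i := hsB i
        simp only [Pi.sub_apply]; omega
  have hinj : Set.InjOn (fun h => f - h) L := by
    rintro h₁ ⟨hh₁, -⟩ h₂ ⟨hh₂, -⟩ heq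
    have hle₁ : h₁ ≤ f := gap_le hS hf hh₁
    have hle₂ : h₂ ≤ f := gap_le hS hf hh₂
    funext i
    have := congrFun heq i
    have l1 : h₁ i ≤ f i := hle₁ i
    have l2 : h₂ i ≤ f i := hle₂ i
    simp only [Pi.sub_apply] at this
    omega
  have hLcard : L.ncard = (S ∩ B).ncard := by
    rw [← himg, Set.ncard_image_of_injOn hinj]
  -- B = (S ∩ B) ∪ Sᶜ
  have hBsplit : B = (S ∩ B) ∪ Sᶜ := by
    ext x
    simp only [Set.mem_union, Set.mem_inter_iff, Set.mem_compl_iff]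
    constructor
    · intro hx; by_cases hxS : x ∈ S
      · exact Or.inl ⟨hxS, hx⟩
      · exact Or.inr hxS
    · rintro (⟨-, hx⟩ | hx)
      · exact hx
      · exact gap_le hS hf hx
  have hdisj2 : Disjoint (S ∩ B) Sᶜ := by
    rw [Set.disjoint_left]; rintro x ⟨hx, -⟩ hx'; exact hx' hx
  have hBeq : B.ncard = (S ∩ B).ncard + genus S := by
    rw [genus]
    nth_rewrite 1 [hBsplit]
    exact Set.ncard_union_eq hdisj2 (hBfin.subset Set.inter_subset_right) hS.2.2
  omega



variable {d : ℕ}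

theorem pf_eq_insert {S : Set (Fin d → ℕ)} {f : Fin d → ℕ} (hS : IsGNS S)
    (hf : IsFrobenius S f) (hM : Mset S f = PF S \ {f}) :
    PF S = insert f (Mset S f) := by
  rw [hM, Set.insert_diff_singleton, Set.insert_eq_self.2 (f_mem_PF hS hf)]

/-- Characterization of almost symmetry via `Mset`. -/
theorem almost_iff {S : Set (Fin d → ℕ)} {f : Fin d → ℕ} (hS : IsGNS S)
    (hf : IsFrobenius S f) :
    AlmostSymmetric S ↔ Mset S f = PF S \ {f} := by
  have hcount := genus_count hS hf
  have hMfin := Mset_finite (S := S) (f := f) hS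
  have hfM := f_not_mem_Mset (S := S) (f := f) hS
  constructor
  · rintro ⟨h, hh, heq⟩
    have hhle : h ≤ f := gap_le hS hf hh
    have hprod : ∏ i, (h i + 1) ≤ ∏ i, (f i + 1) :=
      Finset.prod_le_prod (fun i _ => Nat.zero_le _) (fun i _ => by have h2 : h i ≤ f i := hhle i; omega)
    have htyp : typ S ≤ (Mset S f).ncard + 1 := by
      have h1 : typ S ≤ (insert f (Mset S f)).ncard :=
        Set.ncard_le_ncard (PF_subset_insert hS hf) (hMfin.insert f)
      have h2 : (insert f (Mset S f)).ncard = (Mset S f).ncard + 1 :=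
        Set.ncard_insert_of_notMem hfM hMfin
      omega
    have heq2 : typ S = (Mset S f).ncard + 1 := by omega
    have hins : PF S = insert f (Mset S f) := by
      refine Set.eq_of_subset_of_ncard_le (PF_subset_insert hS hf) ?_ (hMfin.insert f)
      rw [Set.ncard_insert_of_notMem hfM hMfin, ← heq2]
      exact le_rfl
    rw [hins, Set.insert_diff_self_of_notMem hfM]
  · intro hM
    refine ⟨f, f_gap hf, ?_⟩
    have htyp : typ S = (Mset S f).ncard + 1 := by
      rw [typ, pf_eq_insert hS hf hM, Set.ncard_insert_of_notMem hfM hMfin]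
    omega

/-- A GNS between `S` and `ℕ^d \ {f}` also has Frobenius element `f`. -/
theorem frobenius_of_between {S T : Set (Fin d → ℕ)} {f : Fin d → ℕ} (hS : IsGNS S)
    (hf : IsFrobenius S f) (hTc : Tᶜ ⊆ Sᶜ) (hfT : f ∉ T) : IsFrobenius T f := by
  ext x
  simp only [Maximals, Set.mem_setOf_eq, Set.mem_singleton_iff]
  constructor
  · rintro ⟨hx, hmax⟩
    exact hmax f hfT (gap_le hS hf (hTc hx))
  · rintro rfl
    exact ⟨hfT, fun y hy hle => le_antisymm hle (gap_le hS hf (hTc hy))⟩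

/-- If the only special gap is `f`, the GNS is irreducible. -/
theorem irreducible_of_SG {T : Set (Fin d → ℕ)} {f : Fin d → ℕ} (hT : IsGNS T)
    (hfT : IsFrobenius T f) (hSG : SG T = {f}) : GNSIrreducible T := by
  rintro ⟨T₁, T₂, h₁, h₂, ss₁, ss₂, heq⟩
  have key : ∀ T' : Set (Fin d → ℕ), IsGNS T' → T ⊂ T' → f ∈ T' := by
    intro T' hT' hss
    obtain ⟨x, hxT', hxT⟩ := Set.exists_of_ssubset hss
    have hDfin : (T' \ T).Finite := hT.2.2.subset fun y hy => hy.2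
    obtain ⟨m, hm, -, hmax⟩ := exists_maximal_above hDfin ⟨hxT', hxT⟩
    have hm0 : m ≠ 0 := fun hc => hm.2 (hc ▸ hT.1)
    have hmSG : m ∈ SG T := by
      refine ⟨⟨hm.2, fun s hs hs0 => ?_⟩, ?_⟩
      · by_contra hc
        have hmem : m + s ∈ T' \ T := ⟨hT'.2.1 _ _ hm.1 (hss.1 hs), hc⟩
        have : m = m + s := hmax _ hmem (fun i => Nat.le_add_right (m i) (s i))
        refine hs0 (funext fun i => ?_)
        have h9 : m i = m i + s i := congrFun this i
        show s i = 0
        omega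
      · by_contra hc
        have hmem : m + m ∈ T' \ T := ⟨hT'.2.1 _ _ hm.1 hm.1, hc⟩
        have : m = m + m := hmax _ hmem (fun i => Nat.le_add_right (m i) (m i))
        refine hm0 (funext fun i => ?_)
        have h9 : m i = m i + m i := congrFun this i
        show m i = 0
        omega
    rw [hSG] at hmSG
    exact hmSG ▸ hm.1
  have hf1 := key T₁ h₁ ss₁
  have hf2 := key T₂ h₂ ss₂
  have : f ∈ T := heq ▸ ⟨hf1, hf2⟩
  exact f_gap hfT this

/-- Conversely, irreducible implies the only special gap is `f`. -/
theorem SG_of_irreducible {T : Set (Fin d → ℕ)} {f : Fin d → ℕ} (hT : IsGNS T)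
    (hfT : IsFrobenius T f) (hirr : GNSIrreducible T) : SG T = {f} := by
  have hfSG : f ∈ SG T := ⟨f_mem_PF hT hfT, two_f_mem hT hfT⟩
  ext h
  simp only [Set.mem_singleton_iff]
  constructor
  · intro hh
    by_contra hne
    apply hirr
    have hins : ∀ g : Fin d → ℕ, g ∈ SG T → IsGNS (insert g T) := by
      rintro g ⟨⟨hgT, hgPF⟩, hgg⟩
      refine ⟨Set.mem_insert_of_mem _ hT.1, ?_, hT.2.2.subset (Set.compl_subset_compl.2 (Set.subset_insert _ _))⟩
      intro x y hx hy
      rw [Set.mem_insert_iff] at hx hy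
      rcases hx with rfl | hx
      · rcases hy with rfl | hy
        · exact Set.mem_insert_of_mem _ hgg
        · rcases eq_or_ne y 0 with rfl | hy0
          · simpa using Set.mem_insert _ _
          · exact Set.mem_insert_of_mem _ (hgPF y hy hy0)
      · rcases hy with rfl | hy
        · rcases eq_or_ne x 0 with rfl | hx0
          · simpa using Set.mem_insert _ _
          · exact Set.mem_insert_of_mem _ (by rw [add_comm]; exact hgPF x hx hx0)
        · exact Set.mem_insert_of_mem _ (hT.2.1 _ _ hx hy)
    refine ⟨insert h T, insert f T, hins h hh, hins f hfSG, ?_, ?_, ?_⟩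
    · exact (Set.ssubset_insert hh.1.1)
    · exact (Set.ssubset_insert (f_gap hfT))
    · ext x
      simp only [Set.mem_inter_iff, Set.mem_insert_iff]
      constructor
      · intro hx; exact ⟨Or.inr hx, Or.inr hx⟩
      · rintro ⟨rfl | hx, h2⟩
        · rcases h2 with h2 | h2
          · exact absurd h2 hne
          · exact h2
        · exact hx
  · rintro rfl; exact hfSG

/-- Key lemma: if the only special gap is `f`, then every `h ∈ Mset` is pseudo-Frobenius. -/
theorem Mset_subset_PF_of_SG {T : Set (Fin d → ℕ)} {f : Fin d → ℕ} (hT : IsGNS T)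
    (hfT : IsFrobenius T f) (hSG : SG T = {f}) : Mset T f ⊆ PF T := by
  by_contra hc
  rw [Set.not_subset] at hc
  obtain ⟨h0, h0M, h0PF⟩ := hc
  set Mp := Mset T f \ PF T with hMp
  have hMpfin : Mp.Finite := (Mset_finite hT).subset (fun y hy => hy.1)
  obtain ⟨m, hm, -, hmax⟩ := exists_maximal_above hMpfin ⟨h0M, h0PF⟩
  have hmM : m ∈ Mset T f := hm.1
  have hmPF : m ∉ PF T := hm.2
  -- extract s
  have hex : ∃ s ∈ T, s ≠ 0 ∧ m + s ∉ T := by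
    by_contra hc2
    push_neg at hc2
    exact hmPF ⟨hmM.1, fun s hs hs0 => hc2 s hs hs0⟩
  obtain ⟨s, hsT, hs0, hmsT⟩ := hex
  set u : Fin d → ℕ := m + s with hu
  obtain ⟨i0, hi0⟩ : ∃ i, s i ≠ 0 := Function.ne_iff.1 hs0
  have hui0 : 0 < u i0 := by show 0 < m i0 + s i0; omega
  set w : ℕ → (Fin d → ℕ) := fun k i => 2 ^ k * u i with hw
  -- u basic facts
  have huM : u ∈ Mset T f := by
    refine ⟨hmsT, fun t ht heq => ?_⟩
    refine hmM.2 (s + t) (hT.2.1 _ _ hsT ht) ?_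
    rw [← heq, hu, add_assoc]
  have huPF : u ∈ PF T := by
    by_contra hc2
    have humem : u ∈ Mp := ⟨huM, hc2⟩
    have : m = u := hmax u humem (fun i => Nat.le_add_right (m i) (s i))
    refine hs0 (funext fun i => ?_)
    have h9 : m i = m i + s i := congrFun this i
    show s i = 0
    omega
  -- main induction
  have main : ∀ k : ℕ, w k ∈ Mset T f ∧ w k ∈ PF T ∧ ∃ x ∈ T, x ≠ 0 ∧ m + x = w k := by
    intro k
    induction k with
    | zero =>
      have hw0 : w 0 = u := by funext i; show 2 ^ 0 * u i = u i; simp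
      exact hw0 ▸ ⟨huM, huPF, s, hsT, hs0, rfl⟩
    | succ k ih =>
      obtain ⟨hvM, hvPF, x, hxT, hx0, hmx⟩ := ih
      set v := w k with hv
      have hwsucc : w (k + 1) = v + v := by
        funext i
        show 2 ^ (k + 1) * u i = v i + v i
        rw [hv]
        show 2 ^ (k + 1) * u i = 2 ^ k * u i + 2 ^ k * u i
        ring
      have hv0 : v ≠ 0 := by
        intro hc2
        have hpos : 0 < v i0 := by
          rw [hv]; exact Nat.mul_pos (Nat.two_pow_pos _) hui0
        rw [hc2] at hpos; simp at hpos
      have hxv : x + v ∈ T := by rw [add_comm]; exact hvPF.2 x hxT hx0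
      have hxv0 : x + v ≠ 0 := by
        intro hc2
        refine hv0 (funext fun i => ?_)
        have h9 : x i + v i = 0 := congrFun hc2 i
        show v i = 0
        omega
      have hmxv : m + (x + v) = v + v := by rw [← add_assoc, hmx]
      have hnT : v + v ∉ T := by
        intro hc2
        have : v ∈ SG T := ⟨hvPF, hc2⟩
        rw [hSG] at this
        exact f_not_mem_Mset hT (this ▸ hvM)
      have hvvM : v + v ∈ Mset T f := by
        refine ⟨hnT, fun t ht heq => ?_⟩
        rcases eq_or_ne t 0 with rfl | ht0
        · rw [add_zero] at heq
          exact hmM.2 (x + v) hxv (by rw [hmxv, heq])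
        · have h1 : v + t ∈ T := hvPF.2 t ht ht0
          have h2 : v + t ≠ 0 := by
            intro hc2
            refine ht0 (funext fun i => ?_)
            have h9 : v i + t i = 0 := congrFun hc2 i
            show t i = 0
            omega
          exact hvM.2 (v + t) h1 (by rw [← heq]; ring)
      have hvvPF : v + v ∈ PF T := by
        by_contra hc2
        have hmem : v + v ∈ Mp := ⟨hvvM, hc2⟩
        have hle : m ≤ v + v := by
          intro i
          have h9 : m i + (x i + v i) = v i + v i := congrFun hmxv i
          show m i ≤ v i + v i
          omega
        have : m = v + v := hmax _ hmem hle
        rw [this] at hmxv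
        refine hv0 (funext fun i => ?_)
        have h9 : (v i + v i) + (x i + v i) = v i + v i := congrFun hmxv i
        show v i = 0
        omega
      exact hwsucc ▸ ⟨hvvM, hvvPF, x + v, hxv, hxv0, hmxv⟩
  -- infinitude contradiction
  have hinj : Function.Injective w := by
    intro k l hkl
    have := congrFun hkl i0
    simp only [hw] at this
    have h2 : 2 ^ k = 2 ^ l := Nat.eq_of_mul_eq_mul_right hui0 this
    exact Nat.pow_right_injective (by norm_num) h2
  have : (Mset T f).Infinite :=
    Set.infinite_of_injective_forall_mem hinj (fun k => (main k).1)
  exact this (Mset_finite hT)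



variable {d : ℕ}

theorem sub_add_cancel_of_le {x f : Fin d → ℕ} (h : x ≤ f) : (f - x) + x = f := by
  funext i; have h2 : x i ≤ f i := h i
  show (f i - x i) + x i = f i
  omega

theorem eq_sub_of_add_eq {h x f : Fin d → ℕ} (heq : h + x = f) : f - x = h := by
  funext i; have h2 : h i + x i = f i := congrFun heq i
  show f i - x i = h i
  omega

/-- Part 2: the type count. -/
theorem part2 {S : Set (Fin d → ℕ)} {f : Fin d → ℕ} (hS : IsGNS S) (hf : IsFrobenius S f)
    (T A : Set (Fin d → ℕ)) (hT : IsGNS T) (hfT : IsFrobenius T f)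
    (hA : ∀ x ∈ A, IsMinGen T x) (hSTA : S = T \ A)
    (hPF : PF S = PF T ∪ A ∪ (fun x => f - x) '' A) :
    typ S = 2 * A.ncard + typ T := by
  have hAT : A ⊆ T := fun x hx => (hA x hx).1
  have hAPF : A ⊆ PF S := fun x hx => hPF ▸ Or.inl (Or.inr hx)
  have hAS : A ⊆ Sᶜ := fun x hx => (hAPF hx).1
  have hAfin : A.Finite := hS.2.2.subset hAS
  have hAle : ∀ x ∈ A, x ≤ f := fun x hx => gap_le hS hf (hAS hx)
  have hfTn : f ∉ T := f_gap hfT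
  have disj1 : Disjoint (PF T) A := by
    rw [Set.disjoint_left]; intro x hx hxA; exact hx.1 (hAT hxA)
  have disj2 : Disjoint (PF T) ((fun x => f - x) '' A) := by
    rw [Set.disjoint_left]
    rintro y hy ⟨x, hxA, rfl⟩
    have hx0 : x ≠ 0 := (hA x hxA).2.1
    have : (f - x) + x ∈ T := hy.2 x (hAT hxA) hx0
    rw [sub_add_cancel_of_le (hAle x hxA)] at this
    exact hfTn this
  have disj3 : Disjoint A ((fun x => f - x) '' A) := by
    rw [Set.disjoint_left]
    rintro y hyA ⟨x, hxA, rfl⟩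
    have : (f - x) + x ∈ T := hT.2.1 _ _ (hAT hyA) (hAT hxA)
    rw [sub_add_cancel_of_le (hAle x hxA)] at this
    exact hfTn this
  have hinj : Set.InjOn (fun x => f - x) A := by
    intro x hx y hy heq
    have h1 := hAle x hx
    have h2 := hAle y hy
    funext i
    have e : f i - x i = f i - y i := congrFun heq i
    have l1 : x i ≤ f i := h1 i
    have l2 : y i ≤ f i := h2 i
    omega
  have himcard : ((fun x => f - x) '' A).ncard = A.ncard := Set.ncard_image_of_injOn hinj
  have h1 : typ S = (PF T ∪ A ∪ (fun x => f - x) '' A).ncard := by rw [typ, hPF]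
  rw [h1, Set.ncard_union_eq (by rw [Set.disjoint_union_left]; exact ⟨disj2, disj3⟩)
      (((PF_finite hT).union hAfin)) (hAfin.image _),
    Set.ncard_union_eq disj1 (PF_finite hT) hAfin, himcard, typ]
  ring

/-- Backward direction: such a decomposition implies almost symmetry. -/
theorem backward {S : Set (Fin d → ℕ)} {f : Fin d → ℕ} (hS : IsGNS S) (hf : IsFrobenius S f)
    (T A : Set (Fin d → ℕ)) (hT : IsGNS T) (hirr : GNSIrreducible T) (hfT : IsFrobenius T f)
    (hA : ∀ x ∈ A, IsMinGen T x) (hSTA : S = T \ A)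
    (hPF : PF S = PF T ∪ A ∪ (fun x => f - x) '' A) :
    AlmostSymmetric S := by
  have hAT : A ⊆ T := fun x hx => (hA x hx).1
  have hTSA : T = S ∪ A := by
    ext x
    constructor
    · intro hx
      by_cases hxA : x ∈ A
      · exact Or.inr hxA
      · exact Or.inl (hSTA ▸ ⟨hx, hxA⟩)
    · rintro (hx | hx)
      · exact (hSTA ▸ hx : x ∈ T \ A).1
      · exact hAT hx
  rw [almost_iff hS hf]
  apply Set.Subset.antisymm _ (PF_diff_subset_Mset hS hf)
  intro h hh
  refine ⟨?_, fun hc => f_not_mem_Mset hS (hc ▸ hh)⟩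
  by_cases hhA : h ∈ A
  · exact hPF ▸ Or.inl (Or.inr hhA)
  by_cases hex : ∃ x ∈ A, h + x = f
  · obtain ⟨x, hxA, heq⟩ := hex
    exact hPF ▸ Or.inr ⟨x, hxA, eq_sub_of_add_eq heq⟩
  · push_neg at hex
    have hhM : h ∈ Mset T f := by
      refine ⟨fun hc => ?_, fun t ht heq => ?_⟩
      · rcases hTSA ▸ hc with hc' | hc'
        · exact hh.1 hc'
        · exact hhA hc'
      · rcases hTSA ▸ ht with ht' | ht'
        · exact hh.2 t ht' heq
        · exact hex t ht' heq
    have hhPFT : h ∈ PF T :=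
      Mset_subset_PF_of_SG hT hfT (SG_of_irreducible hT hfT hirr) hhM
    exact hPF ▸ Or.inl (Or.inl hhPFT)



variable {d : ℕ}

/-- Forward direction: almost symmetric gives the decomposition. -/
theorem forward {S : Set (Fin d → ℕ)} {f : Fin d → ℕ} (hS : IsGNS S) (hf : IsFrobenius S f)
    (ham : AlmostSymmetric S) :
    ∃ (T A : Set (Fin d → ℕ)),
      IsGNS T ∧ GNSIrreducible T ∧ IsFrobenius T f ∧
      (∀ x ∈ A, IsMinGen T x) ∧ S = T \ A ∧
      PF S = PF T ∪ A ∪ (fun x => f - x) '' A := by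
  have hM : Mset S f = PF S \ {f} := (almost_iff hS hf).1 ham
  set A : Set (Fin d → ℕ) := {h ∈ Mset S f | LexLt (f - h) h} with hAdef
  set T : Set (Fin d → ℕ) := S ∪ A with hTdef
  -- basic facts about Mset
  have memPF : ∀ h ∈ Mset S f, h ∈ PF S := fun h hh => (hM ▸ hh : h ∈ PF S \ {f}).1
  have memle : ∀ h ∈ Mset S f, h ≤ f := fun h hh => gap_le hS hf hh.1
  have memne : ∀ h ∈ Mset S f, h ≠ f := fun h hh => (hM ▸ hh : h ∈ PF S \ {f}).2
  have invol : ∀ h ∈ Mset S f, f - h ∈ Mset S f := by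
    intro h hh
    have hle := memle h hh
    constructor
    · intro hc
      exact hh.2 (f - h) hc (by rw [add_comm]; exact sub_add_cancel_of_le hle)
    · intro t ht heq
      have : t = h := by
        funext i
        have e1 : (f i - h i) + t i = f i := congrFun heq i
        have e2 : h i ≤ f i := hle i
        omega
      exact hh.1 (this ▸ ht)
  have subsub : ∀ h ∈ Mset S f, f - (f - h) = h := by
    intro h hh
    funext i
    have e2 : h i ≤ f i := memle h hh i
    show f i - (f i - h i) = h i
    omega
  have hAM : A ⊆ Mset S f := fun x hx => hx.1
  have hAS : A ⊆ Sᶜ := fun x hx => hx.1.1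
  have key : ∀ a ∈ A, LexLt f (a + a) := by
    intro a ha
    have h1 : LexLt ((f - a) + a) (a + a) := lexLt_add_right a ha.2
    rwa [sub_add_cancel_of_le (memle a (hAM ha))] at h1
  have sumA : ∀ a ∈ A, ∀ b ∈ A, a + b ∈ S := by
    intro a ha b hb
    by_contra hc
    have hlef : a + b ≤ f := gap_le hS hf hc
    rcases lexLe_of_le hlef with heq | hlt
    · -- a + b = f
      have hb' : b = f - a := by
        funext i
        have e1 : a i + b i = f i := congrFun heq i
        show b i = f i - a i
        omega
      have ha' : a = f - b := by
        funext i
        have e1 : a i + b i = f i := congrFun heq i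
        show a i = f i - b i
        omega
      have l1 : LexLt b a := hb' ▸ ha.2
      have l2 : LexLt a b := ha' ▸ hb.2
      exact lexLt_asymm l1 l2
    · -- LexLt (a+b) f
      have l1 : LexLt (f + f) ((a + a) + (b + b)) :=
        lexLt_trans (lexLt_add_right f (key a ha)) (lexLt_add_left (a + a) (key b hb))
      have l2 : LexLt ((a + b) + (a + b)) (f + f) := lexLt_double hlt
      have e : (a + a) + (b + b) = (a + b) + (a + b) := by ring
      rw [e] at l1
      exact lexLt_asymm l1 l2
  have hTGNS : IsGNS T := by
    refine ⟨Or.inl hS.1, ?_, hS.2.2.subset (Set.compl_subset_compl.2 Set.subset_union_left)⟩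
    rintro x y (hx | hx) (hy | hy)
    · exact Or.inl (hS.2.1 _ _ hx hy)
    · rcases eq_or_ne x 0 with rfl | hx0
      · simp only [zero_add]; exact Or.inr hy
      · exact Or.inl (by rw [add_comm]; exact (memPF y (hAM hy)).2 x hx hx0)
    · rcases eq_or_ne y 0 with rfl | hy0
      · simp only [add_zero]; exact Or.inr hx
      · exact Or.inl ((memPF x (hAM hx)).2 y hy hy0)
    · exact Or.inl (sumA x hx y hy)
  have hfnT : f ∉ T := by
    rintro (hc | hc)
    · exact f_gap hf hc
    · exact f_not_mem_Mset hS (hAM hc)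
  have hfT : IsFrobenius T f :=
    frobenius_of_between hS hf (Set.compl_subset_compl.2 Set.subset_union_left) hfnT
  have hSTA : S = T \ A := by
    ext x
    constructor
    · intro hx
      exact ⟨Or.inl hx, fun hc => hAS hc hx⟩
    · rintro ⟨hx | hx, hxA⟩
      · exact hx
      · exact absurd hx hxA
  have hmingen : ∀ x ∈ A, IsMinGen T x := by
    intro a ha
    refine ⟨Or.inr ha, fun hc => hAS ha (hc ▸ hS.1), ?_⟩
    rintro y (hy | hy) z (hz | hz) hy0 hz0 heq
    · exact hAS ha (heq ▸ hS.2.1 _ _ hy hz)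
    · exact hAS ha (heq ▸ (by rw [add_comm]; exact (memPF z (hAM hz)).2 y hy hy0))
    · exact hAS ha (heq ▸ (memPF y (hAM hy)).2 z hz hz0)
    · exact hAS ha (heq ▸ sumA y hy z hz)
  have hSGT : SG T = {f} := by
    ext h
    simp only [Set.mem_singleton_iff]
    constructor
    · rintro ⟨⟨hhT, hhpf⟩, hh2⟩
      by_contra hne
      have hhS : h ∉ S := fun hc => hhT (Or.inl hc)
      have hhA : h ∉ A := fun hc => hhT (Or.inr hc)
      by_cases hex : ∃ t ∈ S, h + t = f
      · obtain ⟨t, ht, heq⟩ := hex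
        rcases eq_or_ne t 0 with rfl | ht0
        · exact hne (by simpa using heq)
        · exact hfnT (heq ▸ hhpf t (Or.inl ht) ht0)
      · push_neg at hex
        have hhM : h ∈ Mset S f := ⟨hhS, hex⟩
        have hhle := memle h hhM
        rcases eq_or_ne (f - h) h with heq | hne2
        · -- h + h = f
          have e1 : (f - h) + h = f := sub_add_cancel_of_le hhle
          rw [heq] at e1
          exact hfnT (e1 ▸ hh2)
        · rcases lexLt_total hne2 with hlt | hlt
          · exact hhA ⟨hhM, hlt⟩
          · have hfhA : f - h ∈ A := ⟨invol h hhM, by rw [subsub h hhM]; exact hlt⟩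
            have hfh0 : f - h ≠ 0 := by
              intro hc
              apply hne
              funext i
              have e1 : f i - h i = 0 := congrFun hc i
              have e2 : h i ≤ f i := hhle i
              show h i = f i
              omega
            have : h + (f - h) ∈ T := hhpf (f - h) (Or.inr hfhA) hfh0
            rw [add_comm, sub_add_cancel_of_le hhle] at this
            exact hfnT this
    · rintro rfl
      exact ⟨f_mem_PF hTGNS hfT, Or.inl (two_f_mem hS hf)⟩
  have hirr : GNSIrreducible T := irreducible_of_SG hTGNS hfT hSGT
  have hPFeq : PF S = PF T ∪ A ∪ (fun x => f - x) '' A := by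
    ext h
    simp only [Set.mem_union, Set.mem_image]
    constructor
    · intro hh
      rcases eq_or_ne h f with rfl | hne
      · exact Or.inl (Or.inl (f_mem_PF hTGNS hfT))
      · have hhM : h ∈ Mset S f := hM ▸ ⟨hh, hne⟩
        have hhle := memle h hhM
        rcases eq_or_ne (f - h) h with heq | hne2
        · -- 2h = f : show h ∈ PF T
          have hff : h + h = f := by
            have e1 : (f - h) + h = f := sub_add_cancel_of_le hhle
            rwa [heq] at e1
          have hhA : h ∉ A := fun hc => lexLt_irrefl h (by have h9 := hc.2; rwa [heq] at h9)
          refine Or.inl (Or.inl ⟨fun hc => ?_, fun t ht ht0 => ?_⟩)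
          · rcases hc with hc | hc
            · exact hh.1 hc
            · exact hhA hc
          · rcases ht with ht | ht
            · exact Or.inl (hh.2 t ht ht0)
            · -- t ∈ A : show h + t ∈ S
              refine Or.inl ?_
              by_contra hc
              have hlef : h + t ≤ f := gap_le hS hf hc
              have l1 : LexLt (h + h) (t + t) := hff ▸ key t ht
              have l2 : LexLt h t := lexLt_of_double l1
              have l3 : LexLt (h + h) (h + t) := lexLt_add_left h l2
              rw [hff] at l3
              rcases lexLe_of_le hlef with heq2 | hlt2
              · -- h + t = f = h + h ⇒ t = h ∈ A, contra
                apply hhA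
                have : t = h := by
                  funext i
                  have e1 : h i + t i = f i := congrFun heq2 i
                  have e2 : h i + h i = f i := congrFun hff i
                  omega
                exact this ▸ ht
              · exact lexLt_asymm l3 hlt2
        · rcases lexLt_total hne2 with hlt | hlt
          · exact Or.inl (Or.inr ⟨hhM, hlt⟩)
          · refine Or.inr ⟨f - h, ⟨invol h hhM, ?_⟩, subsub h hhM⟩
            rw [subsub h hhM]
            exact hlt
    · intro hh
      rcases hh with (hh | hh) | him
      · -- PF T ⊆ PF S
        obtain ⟨hhT, hhpf⟩ := hh
        have hhS : h ∉ S := fun hc => hhT (Or.inl hc)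
        by_cases hex : ∃ t ∈ S, h + t = f
        · obtain ⟨t, ht, heq⟩ := hex
          rcases eq_or_ne t 0 with rfl | ht0
          · have : h = f := by simpa using heq
            exact this ▸ f_mem_PF hS hf
          · exact absurd (heq ▸ hhpf t (Or.inl ht) ht0) hfnT
        · push_neg at hex
          exact memPF h ⟨hhS, hex⟩
      · exact memPF h (hAM hh)
      · obtain ⟨x, hx, hxe⟩ := him
        exact hxe ▸ memPF _ (invol x (hAM hx))
  exact ⟨T, A, hTGNS, hirr, hfT, hmingen, hSTA, hPFeq⟩


end St18


/-- a Frobenius GNS `(S,f)` is almost symmetric iff `S = T ∖ A` for an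
irreducible GNS `T` with Frobenius element `f` and a set `A` of minimal generators of `T`
with `PF(S) = PF(T) ∪ A ∪ (f - A)`; in that case `t(S) = 2|A| + t(T)`. -/
theorem statement18 (d : ℕ) (hd : 0 < d) (S : Set (Fin d → ℕ)) (hS : IsGNS S)
    (f : Fin d → ℕ) (hf : IsFrobenius S f) :
    (AlmostSymmetric S ↔
      ∃ (T : Set (Fin d → ℕ)) (A : Set (Fin d → ℕ)),
        IsGNS T ∧ GNSIrreducible T ∧ IsFrobenius T f ∧
        (∀ x ∈ A, IsMinGen T x) ∧ S = T \ A ∧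
        PF S = PF T ∪ A ∪ (fun x => f - x) '' A) ∧
    (∀ (T : Set (Fin d → ℕ)) (A : Set (Fin d → ℕ)),
        IsGNS T → GNSIrreducible T → IsFrobenius T f →
        (∀ x ∈ A, IsMinGen T x) → S = T \ A →
        PF S = PF T ∪ A ∪ (fun x => f - x) '' A →
        typ S = 2 * A.ncard + typ T) := by
  
  constructor
  · constructor
    · intro ham
      exact St18.forward hS hf ham
    · rintro ⟨T, A, hT, hirr, hfT, hA, hSTA, hPF⟩
      exact St18.backward hS hf T A hT hirr hfT hA hSTA hPF
  · intro T A hT hirr hfT hA hSTA hPF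
    exact St18.part2 hS hf T A hT hfT hA hSTA hPF
end

section
/- Let (T, f) be an irreducible GNS in ℕ_0^d and let A be a set of minimal generators of T each of which is ≤ f with respect to the componentwise order, and set S = T ∖ A (which is a Frobenius GNS with Frobenius element f). Then PF(S) = PF(T) ∪ {x : x ∈ A} ∪ {f − x : x ∈ A} if and only if x + y − f ∉ S for all x, y ∈ A (difference taken in ℤ^d; in particular the condition holds automatically when x + y − f ∉ ℕ_0^d). -/
open scoped BigOperators

namespace Statement19Aux

variable {d : ℕ}

/-- coordinate-sum norm -/
def NN {d : ℕ} (a : Fin d → ℕ) : ℕ := ∑ i, a i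

lemma NN_add (a b : Fin d → ℕ) : NN (a + b) = NN a + NN b := by
  simp [NN, Finset.sum_add_distrib]

lemma NN_pos {a : Fin d → ℕ} (h : a ≠ 0) : 0 < NN a := by
  have hex : ∃ i, a i ≠ 0 := by
    by_contra hc
    push_neg at hc
    exact h (funext hc)
  obtain ⟨i, hi⟩ := hex
  exact Finset.sum_pos' (fun j _ => Nat.zero_le _) ⟨i, Finset.mem_univ i, Nat.pos_of_ne_zero hi⟩

lemma rearr (a t m : Fin d → ℕ) : a + t + m = a + (m + t) := by abel

lemma gaps_le {T : Set (Fin d → ℕ)} (hfin : Tᶜ.Finite) {f : Fin d → ℕ}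
    (hf : IsFrobenius T f) : ∀ h, h ∉ T → h ≤ f := by
  intro h hh
  have hhc : h ∈ Tᶜ := hh
  set Z : Set (Fin d → ℕ) := {y ∈ Tᶜ | h ≤ y} with hZ
  have hZfin : Z.Finite := hfin.subset (fun z hz => hz.1)
  obtain ⟨g, hgZ, hgmax'⟩ := Set.Finite.exists_maximalFor id Z hZfin ⟨h, hhc, le_refl h⟩
  have hgmax : ∀ y ∈ Z, g ≤ y → g = y := fun y hy hgy => le_antisymm hgy (hgmax' hy hgy)
  have hgM : g ∈ Maximals (· ≤ ·) Tᶜ := by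
    refine ⟨hgZ.1, fun y hy hgy => ?_⟩
    exact hgmax y ⟨hy, hgZ.2.trans hgy⟩ hgy
  have : g = f := by
    have := hf ▸ hgM
    simpa using this
  exact this ▸ hgZ.2

lemma frob_not_mem {T : Set (Fin d → ℕ)} {f : Fin d → ℕ} (hf : IsFrobenius T f) :
    f ∉ T := by
  have : f ∈ Maximals (· ≤ ·) Tᶜ := by rw [hf]; rfl
  exact this.1

/-- Key lemma: irreducible implies the symmetry-type condition. -/
lemma keyL {T : Set (Fin d → ℕ)} (hT : IsGNS T) {f : Fin d → ℕ}
    (hf : IsFrobenius T f) (hirr : GNSIrreducible T) :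
    ∀ x, x ∉ T → x + x ≠ f → f - x ∈ T := by
  obtain ⟨h0, hadd, hfin⟩ := hT
  have hgap : ∀ h, h ∉ T → h ≤ f := gaps_le hfin hf
  have hfT : f ∉ T := frob_not_mem hf
  have hf0 : f ≠ 0 := fun h => hfT (h ▸ h0)
  intro x hx hxx
  by_contra hfx
  set B : Set (Fin d → ℕ) := {z | z ∉ T ∧ f - z ∉ T ∧ z + z ≠ f} with hBdef
  have hxB : x ∈ B := ⟨hx, hfx, hxx⟩
  have hBfin : B.Finite := hfin.subset (fun z hz => hz.1)
  obtain ⟨m, hmB, hmaxw'⟩ := Set.Finite.exists_maximalFor NN B hBfin ⟨x, hxB⟩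
  have hmaxw : ∀ z ∈ B, NN m ≤ NN z → NN m = NN z := fun z hz h => le_antisymm h (hmaxw' hz h)
  have hmax : ∀ z ∈ B, NN z ≤ NN m := by
    intro z hz
    rcases le_total (NN z) (NN m) with h | h
    · exact h
    · exact (hmaxw z hz h).ge
  obtain ⟨hm1, hm2, hm3⟩ := hmB
  have hmf : m ≤ f := hgap m hm1
  have hm0 : m ≠ 0 := fun h => hm1 (h ▸ h0)
  have hflip : ∀ z ∈ B, f - z ∈ B := by
    rintro z ⟨hz1, hz2, hz3⟩
    have hzf : z ≤ f := hgap z hz1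
    refine ⟨hz2, ?_, ?_⟩
    · rw [tsub_tsub_cancel_of_le hzf]; exact hz1
    · intro hcon
      have h1 : (f - z) + z = f := tsub_add_cancel_of_le hzf
      have h2 : f - z = z := by
        have := hcon.trans h1.symm
        exact add_left_cancel this
      exact hz3 (h2 ▸ hcon)
  have hNfm : NN (f - m) + NN m = NN f := by
    rw [← NN_add, tsub_add_cancel_of_le hmf]
  -- step (i): m + t ∈ T for t ∈ T nonzero
  have hstep : ∀ t, t ∈ T → t ≠ 0 → m + t ∈ T := by
    intro t ht ht0
    by_contra hmt
    have hmtf : m + t ≤ f := hgap _ hmt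
    have h2 : f - (m + t) ∉ T := by
      intro hc
      have hsum : f - (m + t) + t ∈ T := hadd _ _ hc ht
      have he : (f - (m + t) + t) + m = f := by
        rw [rearr]
        exact tsub_add_cancel_of_le hmtf
      have : f - (m + t) + t = f - m := eq_tsub_of_add_eq he
      exact hm2 (this ▸ hsum)
    rcases eq_or_ne ((m + t) + (m + t)) f with hq | hq
    · have hfmB : f - m ∈ B := hflip m ⟨hm1, hm2, hm3⟩
      have hle := hmax _ hfmB
      have h4 : NN m + NN t + (NN m + NN t) = NN f := by
        rw [← NN_add, ← NN_add, hq]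
      have ht1 : 0 < NN t := NN_pos ht0
      omega
    · have hmem : m + t ∈ B := ⟨hmt, h2, hq⟩
      have hle := hmax _ hmem
      have hNadd : NN (m + t) = NN m + NN t := NN_add m t
      have ht1 : 0 < NN t := NN_pos ht0
      omega
  -- step (ii): 2m ∈ T
  have h2m : m + m ∈ T := by
    by_contra h2m
    have h2mf : m + m ≤ f := hgap _ h2m
    have hf2m : f - (m + m) ∉ T := by
      intro hc
      rcases eq_or_ne (f - (m + m)) 0 with h0' | h0'
      · apply hm3
        have := tsub_add_cancel_of_le h2mf
        rw [h0', zero_add] at this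
        exact this
      · have hmem := hstep _ hc h0'
        rw [add_comm] at hmem
        have he : (f - (m + m) + m) + m = f := by
          rw [rearr]
          exact tsub_add_cancel_of_le h2mf
        have : f - (m + m) + m = f - m := eq_tsub_of_add_eq he
        exact hm2 (this ▸ hmem)
    rcases eq_or_ne ((m + m) + (m + m)) f with hq | hq
    · have hfmB : f - m ∈ B := hflip m ⟨hm1, hm2, hm3⟩
      have hle := hmax _ hfmB
      have h4 : (NN m + NN m) + (NN m + NN m) = NN f := by
        rw [← NN_add, ← NN_add, hq]
      have hm1' : 0 < NN m := NN_pos hm0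
      omega
    · have hmem : m + m ∈ B := ⟨h2m, hf2m, hq⟩
      have hle := hmax _ hmem
      have hNadd : NN (m + m) = NN m + NN m := NN_add m m
      have hm1' : 0 < NN m := NN_pos hm0
      omega
  -- the two covering GNSs
  apply hirr
  refine ⟨T ∪ {f}, T ∪ (fun t => m + t) '' T, ?_, ?_, ?_, ?_, ?_⟩
  · -- T ∪ {f} is a GNS
    have hft : ∀ t, t ∈ T → t ≠ 0 → f + t ∈ T := by
      intro t ht ht0
      by_contra hc
      have : f + t ≤ f := hgap _ hc
      have : t ≤ 0 := by
        have h' : f + t ≤ f + 0 := by simpa using this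
        exact le_of_add_le_add_left h'
      exact ht0 (nonpos_iff_eq_zero.mp this)
    refine ⟨Or.inl h0, ?_, hfin.subset (Set.compl_subset_compl.mpr Set.subset_union_left)⟩
    rintro a b (ha | ha) (hb | hb)
    · exact Or.inl (hadd _ _ ha hb)
    · rw [Set.mem_singleton_iff] at hb
      rcases eq_or_ne a 0 with h | h
      · rw [hb, h, zero_add]; exact Or.inr rfl
      · rw [hb, add_comm]; exact Or.inl (hft a ha h)
    · rw [Set.mem_singleton_iff] at ha
      rcases eq_or_ne b 0 with h | h
      · rw [ha, h, add_zero]; exact Or.inr rfl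
      · rw [ha]; exact Or.inl (hft b hb h)
    · rw [Set.mem_singleton_iff] at ha hb
      rw [ha, hb]
      left
      by_contra hc
      have : f + f ≤ f := hgap _ hc
      have hle0 : f ≤ 0 := by
        have h' : f + f ≤ f + 0 := by simpa using this
        exact le_of_add_le_add_left h'
      exact hf0 (nonpos_iff_eq_zero.mp hle0)
  · -- T ∪ (m + T) is a GNS
    refine ⟨Or.inl h0, ?_, hfin.subset (Set.compl_subset_compl.mpr Set.subset_union_left)⟩
    rintro a b (ha | ⟨ta, hta, rfl⟩) (hb | ⟨tb, htb, rfl⟩)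
    · exact Or.inl (hadd _ _ ha hb)
    · refine Or.inr ⟨tb + a, hadd _ _ htb ha, ?_⟩
      show m + (tb + a) = a + (m + tb); abel
    · refine Or.inr ⟨ta + b, hadd _ _ hta hb, ?_⟩
      show m + (ta + b) = m + ta + b; abel
    · refine Or.inl ?_
      have : (m + ta) + (m + tb) = (m + m) + (ta + tb) := by abel
      rw [this]
      exact hadd _ _ h2m (hadd _ _ hta htb)
  · exact (Set.ssubset_iff_of_subset Set.subset_union_left).mpr ⟨f, Or.inr rfl, hfT⟩
  · refine (Set.ssubset_iff_of_subset Set.subset_union_left).mpr ⟨m, Or.inr ⟨0, h0, (add_zero m)⟩, hm1⟩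
  · ext z
    constructor
    · intro hz; exact ⟨Or.inl hz, Or.inl hz⟩
    · rintro ⟨hz1 | hz1, hz2 | hz2⟩
      · exact hz1
      · exact hz1
      · exact hz2
      · exfalso
        rw [Set.mem_singleton_iff] at hz1
        rcases hz2 with ⟨t, ht, hmt⟩
        have hmtz : m + t = f := by
          have : m + t = z := hmt
          rw [this, hz1]
        have hmt' : t + m = f := by rw [add_comm]; exact hmtz
        have : t = f - m := eq_tsub_of_add_eq hmt'
        exact hm2 (this ▸ ht)

lemma rearrA (u s x : Fin d → ℕ) : u + s + x = (u + x) + s := by abel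
lemma rearrB (s h : Fin d → ℕ) : (s + s) + (h + h) = (h + s) + (h + s) := by abel
lemma rearrC (s u x : Fin d → ℕ) : s + (u + x) = x + (u + s) := by abel
lemma rearrD (w u s : Fin d → ℕ) : w + (u + s) = u + (w + s) := by abel
lemma rearrE (u s : Fin d → ℕ) : (u + s) + (u + s) = u + (u + (s + s)) := by abel
lemma rearrF (s u x : Fin d → ℕ) : (s + s) + (u + x) = (u + (s + s)) + x := by abel

lemma f_mem_PF {T : Set (Fin d → ℕ)} (hT : IsGNS T) {f : Fin d → ℕ}
    (hf : IsFrobenius T f) : f ∈ PF T := by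
  obtain ⟨h0, hadd, hfin⟩ := hT
  have hgap := gaps_le hfin hf
  refine ⟨frob_not_mem hf, fun t ht ht0 => ?_⟩
  by_contra hc
  have hle : f + t ≤ f := hgap _ hc
  have h' : f + t ≤ f + 0 := by simpa using hle
  exact ht0 (nonpos_iff_eq_zero.mp (le_of_add_le_add_left h'))

lemma halfPF {T : Set (Fin d → ℕ)} (hT : IsGNS T) {f : Fin d → ℕ}
    (hf : IsFrobenius T f) (hirr : GNSIrreducible T) {h : Fin d → ℕ}
    (hh : h ∉ T) (hhh : h + h = f) : h ∈ PF T := by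
  have h0 := hT.1
  have hadd := hT.2.1
  have hfin := hT.2.2
  have hgap := gaps_le hfin hf
  refine ⟨hh, fun t ht ht0 => ?_⟩
  by_contra hc
  have hle : h + t ≤ f := hgap _ hc
  have hne : (h + t) + (h + t) ≠ f := by
    intro he
    have he2 : h + (h + (t + t)) = h + (h + 0) := by
      calc h + (h + (t + t)) = (h + t) + (h + t) := by abel
      _ = f := he
      _ = h + h := hhh.symm
      _ = h + (h + 0) := by rw [add_zero]
    have h2 : t + t = 0 := add_left_cancel (add_left_cancel he2)
    have ht' : t = 0 := by
      have h3 := congrArg NN h2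
      rw [NN_add] at h3
      have h4 : NN t = 0 := by
        have : NN (0 : Fin d → ℕ) = 0 := by simp [NN]
        omega
      by_contra hne'
      exact absurd h4 (Nat.pos_iff_ne_zero.mp (NN_pos hne'))
    exact ht0 ht'
  have hkey := keyL ⟨h0, hadd, hfin⟩ hf hirr (h + t) hc hne
  have h1 : (f - (h + t)) + (h + t) = f := tsub_add_cancel_of_le hle
  have h2 : (f - (h + t) + t) + h = h + h := by
    calc (f - (h + t) + t) + h = (f - (h + t)) + (h + t) := by rw [rearr]
    _ = f := h1
    _ = h + h := hhh.symm
  have h3 : f - (h + t) + t = h := add_right_cancel h2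
  exact hh (h3 ▸ hadd _ _ hkey ht)

lemma PF_cls {T : Set (Fin d → ℕ)} (hT : IsGNS T) {f : Fin d → ℕ}
    (hf : IsFrobenius T f) (hirr : GNSIrreducible T) :
    ∀ h ∈ PF T, h = f ∨ h + h = f := by
  intro h hh
  have hfin := hT.2.2
  have hgap := gaps_le hfin hf
  by_contra hc
  push_neg at hc
  obtain ⟨hne, hne2⟩ := hc
  have hhf : h ≤ f := hgap _ hh.1
  have hkey := keyL hT hf hirr h hh.1 hne2
  have hfh0 : f - h ≠ 0 := by
    intro h0'
    exact hne (le_antisymm hhf (tsub_eq_zero_iff_le.mp h0'))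
  have hmem := hh.2 _ hkey hfh0
  rw [add_comm, tsub_add_cancel_of_le hhf] at hmem
  exact frob_not_mem hf hmem

end Statement19Aux

open Statement19Aux

/-- for an irreducible GNS `(T,f)` and a set `A` of minimal generators of
`T` below `f`, setting `S = T ∖ A`, one has `PF(S) = PF(T) ∪ A ∪ (f - A)` iff
`x + y - f ∉ S` for all `x, y ∈ A`. -/
theorem statement19 (d : ℕ) (hd : 0 < d) (T : Set (Fin d → ℕ)) (hT : IsGNS T)
    (f : Fin d → ℕ) (hf : IsFrobenius T f) (hirr : GNSIrreducible T)
    (A : Set (Fin d → ℕ)) (hA : ∀ x ∈ A, IsMinGen T x ∧ x ≤ f) :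
    PF (T \ A) = PF T ∪ A ∪ (fun x => f - x) '' A ↔
      ∀ x ∈ A, ∀ y ∈ A, ¬ ∃ s ∈ T \ A, s + f = x + y := by
  have h0 := hT.1
  have hadd := hT.2.1
  have hfin := hT.2.2
  have hgap : ∀ h, h ∉ T → h ≤ f := gaps_le hfin hf
  have hfT : f ∉ T := frob_not_mem hf
  have hkey := keyL hT hf hirr
  set S := T \ A with hSdef
  have hAT : ∀ x ∈ A, x ∈ T := fun x hx => (hA x hx).1.1
  have hA0 : ∀ x ∈ A, x ≠ 0 := fun x hx => (hA x hx).1.2.1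
  have hAf : ∀ x ∈ A, x ≤ f := fun x hx => (hA x hx).2
  have hAgen : ∀ x ∈ A, ∀ y ∈ T, ∀ z ∈ T, y ≠ 0 → z ≠ 0 → y + z ≠ x :=
    fun x hx => (hA x hx).1.2.2
  have hAnS : ∀ x ∈ A, x ∉ S := fun x hx hxS => hxS.2 hx
  have hfA : ∀ x ∈ A, f - x ∉ T := by
    intro x hx hc
    rcases eq_or_ne (f - x) 0 with h' | h'
    · have h1 : f ≤ x := tsub_eq_zero_iff_le.mp h'
      have h2 : x = f := le_antisymm (hAf x hx) h1
      exact hfT (h2 ▸ hAT x hx)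
    · have hm : (f - x) + x ∈ T := hadd _ _ hc (hAT x hx)
      rw [tsub_add_cancel_of_le (hAf x hx)] at hm
      exact hfT hm
  have hS0 : (0 : Fin d → ℕ) ∈ S := ⟨h0, fun hc => hA0 0 hc rfl⟩
  have hSadd : ∀ s ∈ S, ∀ t ∈ S, s + t ∈ S := by
    intro s hs t ht
    rcases eq_or_ne s 0 with h' | h'
    · rw [h', zero_add]; exact ht
    rcases eq_or_ne t 0 with h'' | h''
    · rw [h'', add_zero]; exact hs
    refine ⟨hadd _ _ hs.1 ht.1, fun hc => ?_⟩
    exact hAgen _ hc s hs.1 t ht.1 h' h'' rfl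
  have hAPF : ∀ x ∈ A, x ∈ PF S := by
    intro x hx
    refine ⟨hAnS x hx, fun s hs hs0 => ?_⟩
    refine ⟨hadd _ _ (hAT x hx) hs.1, fun hc => ?_⟩
    exact hAgen _ hc x (hAT x hx) s hs.1 (hA0 x hx) hs0 rfl
  have hsub : PF S ⊆ PF T ∪ A ∪ (fun x => f - x) '' A := by
    intro h hh
    by_cases hhA : h ∈ A
    · exact Or.inl (Or.inr hhA)
    have hhT : h ∉ T := fun hc => hh.1 ⟨hc, hhA⟩
    have hhf : h ≤ f := hgap _ hhT
    by_cases hhf' : h = f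
    · exact Or.inl (Or.inl (hhf' ▸ f_mem_PF hT hf))
    have hfh0 : f - h ≠ 0 := by
      intro h0'
      exact hhf' (le_antisymm hhf (tsub_eq_zero_iff_le.mp h0'))
    by_cases hfhS : f - h ∈ S
    · exfalso
      have hm := hh.2 _ hfhS hfh0
      rw [add_comm, tsub_add_cancel_of_le hhf] at hm
      exact hfT hm.1
    by_cases hfhA : f - h ∈ A
    · exact Or.inr ⟨f - h, hfhA, tsub_tsub_cancel_of_le hhf⟩
    have hfhT : f - h ∉ T := fun hc => hfhS ⟨hc, hfhA⟩
    rcases eq_or_ne ((f - h) + (f - h)) f with hq | hq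
    · have h1 : (f - h) + h = f := tsub_add_cancel_of_le hhf
      have h2 : f - h = h := add_left_cancel (hq.trans h1.symm)
      refine Or.inl (Or.inl (halfPF hT hf hirr hhT ?_))
      rw [← h2]; exact hq
    · have hm := hkey (f - h) hfhT hq
      rw [tsub_tsub_cancel_of_le hhf] at hm
      exact absurd hm hhT
  constructor
  · intro heq x hx y hy hex
    obtain ⟨s, hsS, hsf⟩ := hex
    rcases eq_or_ne s 0 with h' | h'
    · rw [h', zero_add] at hsf
      exact hfT (by rw [hsf]; exact hadd _ _ (hAT x hx) (hAT y hy))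
    · have hfxPF : f - x ∈ PF S := by
        rw [hSdef, heq]
        exact Or.inr ⟨x, hx, rfl⟩
      have hmem := hfxPF.2 s hsS h'
      have h1 : (f - x) + x = f := tsub_add_cancel_of_le (hAf x hx)
      have he : (f - x) + s + x = y + x := by
        calc (f - x) + s + x = ((f - x) + x) + s := rearrA _ _ _
        _ = f + s := by rw [h1]
        _ = s + f := add_comm _ _
        _ = x + y := hsf
        _ = y + x := add_comm _ _
      have hy' : (f - x) + s = y := add_right_cancel he
      exact (hAnS y hy) (hy' ▸ hmem)
  · intro hC
    apply Set.Subset.antisymm hsub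
    rintro h ((hPFT | hhA) | ⟨x, hx, rfl⟩)
    · have hcls := PF_cls hT hf hirr h hPFT
      refine ⟨fun hc => hPFT.1 hc.1, fun s hs hs0 => ?_⟩
      have hsT : h + s ∈ T := hPFT.2 s hs.1 hs0
      refine ⟨hsT, fun hcA => ?_⟩
      rcases hcls with rfl | h2
      · have hle : h + s ≤ h := hAf _ hcA
        have h' : h + s ≤ h + 0 := by simpa using hle
        exact hs0 (nonpos_iff_eq_zero.mp (le_of_add_le_add_left h'))
      · refine hC (h + s) hcA (h + s) hcA ⟨s + s, hSadd s hs s hs, ?_⟩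
        rw [← h2]
        exact rearrB s h
    · exact hAPF h hhA
    · refine ⟨fun hc => hfA x hx hc.1, fun s hs hs0 => ?_⟩
      by_contra hcS
      have hxf := hAf x hx
      have h1 : (f - x) + x = f := tsub_add_cancel_of_le hxf
      by_cases hcA : (f - x) + s ∈ A
      · refine hC x hx _ hcA ⟨s, hs, ?_⟩
        calc s + f = s + ((f - x) + x) := by rw [h1]
        _ = x + ((f - x) + s) := rearrC s (f - x) x
      · have hgT : (f - x) + s ∉ T := fun hc => hcS ⟨hc, hcA⟩
        rcases eq_or_ne (((f - x) + s) + ((f - x) + s)) f with hq | hq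
        · have h2 : (f - x) + (s + s) = x := by
            have hcc : (f - x) + ((f - x) + (s + s)) = (f - x) + x := by
              calc (f - x) + ((f - x) + (s + s)) = ((f - x) + s) + ((f - x) + s) :=
                (rearrE (f - x) s).symm
              _ = f := hq
              _ = (f - x) + x := h1.symm
            exact add_left_cancel hcc
          refine hC x hx x hx ⟨s + s, hSadd s hs s hs, ?_⟩
          calc (s + s) + f = (s + s) + ((f - x) + x) := by rw [h1]
          _ = ((f - x) + (s + s)) + x := rearrF s (f - x) x
          _ = x + x := by rw [h2]
        · have hw := hkey _ hgT hq
          have hw1 : (f - ((f - x) + s)) + ((f - x) + s) = f :=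
            tsub_add_cancel_of_le (hgap _ hgT)
          have h2 : (f - ((f - x) + s)) + s = x := by
            have hcc : (f - x) + ((f - ((f - x) + s)) + s) = (f - x) + x := by
              calc (f - x) + ((f - ((f - x) + s)) + s)
                  = (f - ((f - x) + s)) + ((f - x) + s) := (rearrD _ (f - x) s).symm
              _ = f := hw1
              _ = (f - x) + x := h1.symm
            exact add_left_cancel hcc
          have hw0 : (f - ((f - x) + s)) ≠ 0 := by
            intro h0'
            rw [h0', zero_add] at h2
            exact hAnS x hx (h2 ▸ hs)
          exact hAgen x hx _ hw s hs.1 hw0 hs0 h2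
end
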